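/- arXiv:2509.00162 — 2 statements merged into one kernel-verified Lean document; each statement's English description precedes it below -/
import Mathlib

section
/- Let θ be the substitution on {a,b} with θ(a) = ab and θ(b) = aa, let X_θ be its substitution subshift, let A = {x ∈ X_θ : (x_0,…,x_7) = (a,b,a,a,a,b,a,b)}, and define p : X_θ → {1,2,3} by p(x) = 3 if x ∈ A, p(x) = 1 if x ∈ σ(A), and p(x) = 2 otherwise. Then p is continuous, the map S(x) = σ^{p(x)}(x) is a homeomorphism of X_θ, every S-orbit is dense in X_θ, and every σ-orbit in X_θ is the union of exactly 2 distinct S-orbits (i.e., the speedup has orbit number 2). -/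
open Set Topology Classical

noncomputable section

/-- The left shift `σ` on bi-infinite sequences: `(σ x) n = x (n+1)`. -/
def shiftMap {A : Type} (x : ℤ → A) : ℤ → A := fun n => x (n + 1)

/-- The shift by an integer amount: `shiftZ n x = σ^n x`. -/
def shiftZ {A : Type} (n : ℤ) (x : ℤ → A) : ℤ → A := fun m => x (m + n)

/-- A bi-infinite sequence is Toeplitz if every coordinate is periodically repeated. -/
def IsToeplitz {A : Type} (x : ℤ → A) : Prop :=
  ∀ i : ℤ, ∃ p : ℕ, 0 < p ∧ ∀ k : ℤ, x (i + k * (p : ℤ)) = x i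

/-- The closure of the full shift orbit of `x`. -/
def orbitClosure {A : Type} [TopologicalSpace A] (x : ℤ → A) : Set (ℤ → A) :=
  closure {y | ∃ n : ℤ, shiftZ n x = y}

/-- The finite word `x_i x_{i+1} ⋯ x_{i+n-1}`. -/
def seqWord {A : Type} (x : ℤ → A) (i : ℤ) (n : ℕ) : List A :=
  List.ofFn fun m : Fin n => x (i + (m : ℕ))

/-- Iterates `θ^k` of a substitution, applied to a letter. -/
def substPow {A : Type} (θ : A → List A) : ℕ → A → List A
  | 0, a => [a]
  | k + 1, a => (θ a).flatMap (substPow θ k)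

/-- The substitution subshift of `θ`: all sequences whose finite subwords occur in
some `θ^k(a)`. -/
def substShift {A : Type} (θ : A → List A) : Set (ℤ → A) :=
  {x | ∀ i : ℤ, ∀ n : ℕ, ∃ (k : ℕ) (a : A), (seqWord x i n).IsInfix (substPow θ k a)}

/-- The full orbit of `x` under an (invertible) map `S`, within the set `X`. -/
def orbitIn {α : Type} (S : α → α) (X : Set α) (x : α) : Set α :=
  {y | y ∈ X ∧ ∃ n : ℕ, S^[n] x = y ∨ S^[n] y = x}

/-- Every `S`-orbit within `X` is dense in `X`. -/
def MinimalOn {α : Type} [TopologicalSpace α] (S : α → α) (X : Set α) : Prop :=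
  ∀ x ∈ X, X ⊆ closure (orbitIn S X x)

/-- Every `T`-orbit in `X` is the union of exactly `c` distinct `S`-orbits. -/
def OrbitNumberOn {α : Type} (T S : α → α) (X : Set α) (c : ℕ) : Prop :=
  ∀ x ∈ X, ∃ r : Fin c → α,
    (∀ i, r i ∈ orbitIn T X x) ∧
    (∀ i j, i ≠ j → r j ∉ orbitIn S X (r i)) ∧
    (∀ y ∈ orbitIn T X x, ∃ i, y ∈ orbitIn S X (r i))

/-- `S` restricts to a homeomorphism of the subset `X`. -/
def RestrictsToHomeomorph {α : Type} [TopologicalSpace α] (S : α → α) (X : Set α) : Prop :=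
  ∃ e : X ≃ₜ X, ∀ x : X, (e x : α) = S (x : α)

/-- The systems `(X, S)` and `(Y, R)` are topologically conjugate. -/
def TopConj {α β : Type} [TopologicalSpace α] [TopologicalSpace β]
    (X : Set α) (S : α → α) (Y : Set β) (R : β → β) : Prop :=
  ∃ (hS : Set.MapsTo S X X) (hR : Set.MapsTo R Y Y) (h : X ≃ₜ Y),
    ∀ x : X, h (Set.MapsTo.restrict S X X hS x) = Set.MapsTo.restrict R Y Y hR (h x)

/-- `(Y, R)` is a topological factor of `(X, S)`. -/
def IsFactorOn {α β : Type} [TopologicalSpace α] [TopologicalSpace β]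
    (X : Set α) (S : α → α) (Y : Set β) (R : β → β) : Prop :=
  ∃ F : α → β, Set.MapsTo F X Y ∧ ContinuousOn F X ∧ Set.SurjOn F X Y ∧
    ∀ x ∈ X, F (S x) = R (F x)

/-- `(X, S)` is a Toeplitz flow: it is topologically conjugate to the orbit closure of
some Toeplitz sequence over some finite alphabet, with the shift map. -/
def IsToeplitzFlow {α : Type} [TopologicalSpace α] (X : Set α) (S : α → α) : Prop :=
  ∃ (B : Type) (_ : Fintype B) (z : ℤ → B), IsToeplitz z ∧
    (letI : TopologicalSpace B := ⊥
     TopConj X S (orbitClosure z) shiftMap)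

/-- `Per_p(x)`: the set of positions where `x` is periodic with period `p`. -/
def PerSet {A : Type} (x : ℤ → A) (p : ℕ) : Set ℤ :=
  {k | ∀ n : ℤ, x (k + n * (p : ℤ)) = x k}

/-- `p` is an essential period of `x`. -/
def IsEssentialPeriod {A : Type} (x : ℤ → A) (p : ℕ) : Prop :=
  0 < p ∧ ¬ ∃ q : ℕ, 0 < q ∧ q < p ∧
    ((fun k => k + (q : ℤ)) '' PerSet x p = PerSet x p) ∧
    (∀ k ∈ PerSet x p, x (k + (q : ℤ)) = x k)

/-- A period structure for a Toeplitz sequence `x`. -/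
def IsPeriodStructure {A : Type} (x : ℤ → A) (p : ℕ → ℕ) : Prop :=
  StrictMono p ∧ (∀ k, IsEssentialPeriod x (p k)) ∧
  (∀ k, p k ∣ p (k + 1)) ∧ (⋃ k, PerSet x (p k)) = Set.univ

/-- `x` is a (σ-)periodic sequence. -/
def IsPeriodicSeq {A : Type} (x : ℤ → A) : Prop :=
  ∃ n : ℕ, 0 < n ∧ ∀ m : ℤ, x (m + (n : ℤ)) = x m

/-- `z` is the bi-infinite concatenation of the `ψ`-images of the letters of `y`,
with `ψ(y₀)` beginning at coordinate `0`. -/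
def IsConcat {B C : Type} (ψ : B → List C) (y : ℤ → B) (z : ℤ → C) : Prop :=
  ∃ s : ℤ → ℤ, s 0 = 0 ∧
    (∀ n : ℤ, s (n + 1) = s n + ((ψ (y n)).length : ℤ)) ∧
    (∀ n : ℤ, ∀ j : Fin (ψ (y n)).length, z (s n + (j : ℕ)) = (ψ (y n)).get j)

/-- `p(x,n) = Σ_{i<n} p(Sⁱ x)`. -/
def psum {X : Type} (p : X → ℕ) (S : X → X) (x : X) (n : ℕ) : ℕ :=
  ∑ i ∈ Finset.range n, p (S^[i] x)


/-- The substitution θ(a) = ab, θ(b) = aa on the alphabet {a, b} = Fin 2 (a = 0, b = 1). -/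
def theta : Fin 2 → List (Fin 2) := fun i => if i = 0 then [0, 1] else [0, 0]

/-- The cylinder set A = [θ³(a)] = {x ∈ X_θ : x₀…x₇ = abaaabab}. -/
def Aset : Set (ℤ → Fin 2) :=
  {x | x ∈ substShift theta ∧ seqWord x 0 8 = [0, 1, 0, 0, 0, 1, 0, 1]}

open scoped Classical in
/-- The jump function: p = 3 on A, p = 1 on σ(A), p = 2 elsewhere. -/
noncomputable def jump (x : ℤ → Fin 2) : ℕ :=
  if x ∈ Aset then 3 else if x ∈ shiftMap '' Aset then 1 else 2

/-- The speedup map S(x) = σ^{p(x)}(x). -/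
noncomputable def Sspeed (x : ℤ → Fin 2) : ℤ → Fin 2 := shiftMap^[jump x] x


/-- The period-doubling sequence: uf n = 0 if v₂(n+1) is even, 1 otherwise. -/
def uf : ℕ → Fin 2
  | n => if _h : n % 2 = 1 then 1 - uf (n / 2) else 0
decreasing_by exact Nat.div_lt_self (by omega) (by norm_num)

lemma uf_even {n : ℕ} (h : n % 2 = 0) : uf n = 0 := by
  rw [uf]; simp [h]

lemma uf_odd {n : ℕ} (h : n % 2 = 1) : uf n = 1 - uf (n / 2) := by
  rw [uf]; simp [h]

lemma uf_two_mul (m : ℕ) : uf (2 * m) = 0 := uf_even (by omega)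

lemma uf_two_mul_add_one (m : ℕ) : uf (2 * m + 1) = 1 - uf m := by
  rw [uf_odd (by omega)]
  have h : (2 * m + 1) / 2 = m := by omega
  rw [h]

lemma uf_ne_zero_odd {n : ℕ} (h : uf n ≠ 0) : n % 2 = 1 := by
  by_contra h'
  exact h (uf_even (by omega))

lemma uf0 : uf 0 = 0 := uf_even (by norm_num)
lemma uf1 : uf 1 = 1 := by
  have h : uf 1 = 1 - uf 0 := uf_two_mul_add_one 0
  rw [h, uf0]; decide
lemma uf2 : uf 2 = 0 := uf_even (by norm_num)
lemma uf3 : uf 3 = 0 := by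
  have h : uf 3 = 1 - uf 1 := uf_two_mul_add_one 1
  rw [h, uf1]; decide
lemma uf4 : uf 4 = 0 := uf_even (by norm_num)
lemma uf5 : uf 5 = 1 := by
  have h : uf 5 = 1 - uf 2 := uf_two_mul_add_one 2
  rw [h, uf2]; decide
lemma uf6 : uf 6 = 0 := uf_even (by norm_num)
lemma uf7 : uf 7 = 1 := by
  have h : uf 7 = 1 - uf 3 := uf_two_mul_add_one 3
  rw [h, uf3]; decide

/-- uf(2^t(2s+1) - 1) = uf(2^t - 1). -/
lemma uf_pow_form : ∀ t s : ℕ, uf (2 ^ t * (2 * s + 1) - 1) = uf (2 ^ t - 1) := by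
  intro t
  induction t with
  | zero =>
    intro s
    have e : 2 ^ 0 * (2 * s + 1) - 1 = 2 * s := by norm_num
    have e2 : 2 ^ 0 - 1 = 0 := by norm_num
    rw [e, e2, uf_two_mul, uf0]
  | succ t ih =>
    intro s
    have e : 2 ^ (t+1) * (2 * s + 1) = 2 * (2 ^ t * (2 * s + 1)) := by ring
    have hA : 1 ≤ 2 ^ t * (2 * s + 1) := Nat.one_le_iff_ne_zero.mpr (by positivity)
    have e2 : 2 ^ (t+1) = 2 * 2 ^ t := by ring
    have hB : 1 ≤ 2 ^ t := Nat.one_le_two_pow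
    have h1 : 2 ^ (t+1) * (2 * s + 1) - 1 = 2 * (2 ^ t * (2 * s + 1) - 1) + 1 := by omega
    have h2 : 2 ^ (t+1) - 1 = 2 * (2 ^ t - 1) + 1 := by omega
    rw [h1, h2, uf_two_mul_add_one, uf_two_mul_add_one, ih s]

/-- Block property: if uf i = 0 then the i-th level-K block of uf equals the prefix. -/
lemma uf_block : ∀ (K i r : ℕ), uf i = 0 → r < 2 ^ K → uf (2 ^ K * i + r) = uf r := by
  intro K
  induction K with
  | zero =>
    intro i r h hr
    interval_cases r
    simpa [uf0] using h
  | succ K ih =>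
    intro i r h hr
    rcases Nat.even_or_odd r with ⟨r', rfl⟩ | ⟨r', rfl⟩
    · have : 2 ^ (K+1) * i + (r' + r') = 2 * (2 ^ K * i + r') := by ring
      rw [this, uf_two_mul, show r' + r' = 2 * r' from by ring, uf_two_mul]
    · have : 2 ^ (K+1) * i + (2 * r' + 1) = 2 * (2 ^ K * i + r') + 1 := by ring
      rw [this, uf_two_mul_add_one, uf_two_mul_add_one, ih i r' h (by omega)]

lemma uf_shift : ∀ (K r : ℕ), r + 1 < 2 ^ K → uf (2 ^ K + r) = uf r := by
  intro K
  induction K with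
  | zero => intro r hr; omega
  | succ K ih =>
    intro r hr
    rcases Nat.even_or_odd r with ⟨r', rfl⟩ | ⟨r', rfl⟩
    · have : 2 ^ (K+1) + (r' + r') = 2 * (2 ^ K + r') := by ring
      rw [this, uf_two_mul, show r' + r' = 2 * r' from by ring, uf_two_mul]
    · have : 2 ^ (K+1) + (2 * r' + 1) = 2 * (2 ^ K + r') + 1 := by ring
      rw [this, uf_two_mul_add_one, uf_two_mul_add_one, ih r' (by omega)]

/-- Blocks 2 and 3 at any level agree (for a double-length stretch). -/
lemma uf23 (G r : ℕ) (hr : r < 2 * 2 ^ G) : uf (2 * 2 ^ G + r) = uf (3 * 2 ^ G + r) := by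
  rcases Nat.lt_or_ge r (2 ^ G) with h | h
  · rw [show 2 * 2 ^ G + r = 2 ^ G * 2 + r from by ring,
      show 3 * 2 ^ G + r = 2 ^ G * 3 + r from by ring,
      uf_block G 2 r uf2 h, uf_block G 3 r uf3 h]
  · obtain ⟨r', rfl⟩ : ∃ r', r = 2 ^ G + r' := ⟨r - 2 ^ G, by omega⟩
    have hr' : r' < 2 ^ G := by omega
    rw [show 2 * 2 ^ G + (2 ^ G + r') = 2 ^ G * 3 + r' from by ring,
      uf_block G 3 r' uf3 hr',
      show 3 * 2 ^ G + (2 ^ G + r') = 2 ^ (G+1) * 2 + r' from by ring,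
      uf_block (G+1) 2 r' uf2 (by calc r' < 2 ^ G := hr'
                                    _ ≤ 2 ^ (G+1) := Nat.pow_le_pow_right (by norm_num) (by omega))]

lemma uf_adj {i : ℕ} (h : uf i = 1) : uf (i + 1) = 0 := by
  have : i % 2 = 1 := uf_ne_zero_odd (by rw [h]; decide)
  exact uf_even (by omega)




-- ## Chunk 2 : substitution words are windows of uf

def qf (k m : ℕ) : Fin 2 := if m = 2 ^ k - 1 then 1 - uf m else uf m

lemma fin2_sub_sub (z : Fin 2) : 1 - (1 - z) = z := by revert z; decide
lemma fin2_cases (z : Fin 2) : z = 0 ∨ z = 1 := by revert z; decide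
lemma fin2_ne_one_sub (z : Fin 2) : ¬ z = 1 - z := by revert z; decide

lemma subst_formula : ∀ k, substPow theta k 0 = List.ofFn (fun i : Fin (2^k) => uf i) ∧
    substPow theta k 1 = List.ofFn (fun i : Fin (2^k) => qf k i) := by
  intro k
  induction k with
  | zero =>
    constructor
    · apply List.ext_getElem (by simp [substPow])
      intro i h1 h2
      have hi : i = 0 := by simp [substPow] at h1; omega
      subst hi
      simp [substPow, List.getElem_ofFn, uf0]
    · apply List.ext_getElem (by simp [substPow])
      intro i h1 h2
      have hi : i = 0 := by simp [substPow] at h1; omega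
      subst hi
      simp [substPow, List.getElem_ofFn, qf, uf0]
  | succ k ih =>
    obtain ⟨ihP, ihQ⟩ := ih
    have hsplit0 : substPow theta (k+1) 0 = substPow theta k 0 ++ substPow theta k 1 := by
      show (theta 0).flatMap (substPow theta k) = _
      simp [theta]
    have hsplit1 : substPow theta (k+1) 1 = substPow theta k 0 ++ substPow theta k 0 := by
      show (theta 1).flatMap (substPow theta k) = _
      simp [theta]
    have hp : 2 ^ k ≥ 1 := Nat.one_le_two_pow
    have hpow : 2 ^ (k+1) = 2 ^ k + 2 ^ k := by rw [pow_succ]; ring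
    constructor
    · rw [hsplit0, ihP, ihQ]
      apply List.ext_getElem (by simp [hpow])
      intro i h1 h2
      simp only [List.length_ofFn] at h2
      simp only [List.getElem_ofFn]
      rcases Nat.lt_or_ge i (2 ^ k) with hi | hi
      · rw [List.getElem_append_left (by simpa using hi)]
        simp
      · rw [List.getElem_append_right (by simpa using hi)]
        simp only [List.getElem_ofFn, List.length_ofFn]
        show qf k (i - 2 ^ k) = uf i
        set r := i - 2 ^ k with hr
        have hir : i = 2 ^ k + r := by omega
        rcases Nat.lt_or_ge r (2 ^ k - 1) with hrlt | hrge
        · have hqf : qf k r = uf r := by unfold qf; rw [if_neg (by omega)]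
          rw [hqf, hir, uf_shift k r (by omega)]
        · have hre : r = 2 ^ k - 1 := by omega
          have hqf : qf k r = 1 - uf r := by unfold qf; rw [if_pos hre]
          rw [hqf, hir, hre]
          have e1 : 2 ^ k + (2 ^ k - 1) = 2 * (2 ^ k - 1) + 1 := by omega
          rw [e1, uf_two_mul_add_one]
    · rw [hsplit1, ihP]
      apply List.ext_getElem (by simp [hpow])
      intro i h1 h2
      simp only [List.length_ofFn] at h2
      simp only [List.getElem_ofFn]
      rcases Nat.lt_or_ge i (2 ^ k) with hi | hi
      · rw [List.getElem_append_left (by simpa using hi)]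
        simp only [List.getElem_ofFn]
        show uf i = qf (k+1) i
        unfold qf
        rw [if_neg (by omega)]
      · rw [List.getElem_append_right (by simpa using hi)]
        simp only [List.getElem_ofFn, List.length_ofFn]
        show uf (i - 2 ^ k) = qf (k+1) i
        set r := i - 2 ^ k with hr
        have hir : i = 2 ^ k + r := by omega
        have hrlt : r < 2 ^ k := by omega
        unfold qf
        rcases Nat.lt_or_ge r (2 ^ k - 1) with hc | hc
        · rw [if_neg (by omega), hir, uf_shift k r (by omega)]
        · have hre : r = 2 ^ k - 1 := by omega
          have hie : i = 2 ^ (k+1) - 1 := by omega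
          rw [if_pos hie, hir, hre]
          have e1 : 2 ^ k + (2 ^ k - 1) = 2 * (2 ^ k - 1) + 1 := by omega
          rw [e1, uf_two_mul_add_one, fin2_sub_sub]

lemma infix_P {v : List (Fin 2)} {k : ℕ} {a : Fin 2}
    (h : v.IsInfix (substPow theta k a)) :
    ∃ s : ℕ, ∀ i, i < v.length → ∀ (hi : i < v.length), v[i] = uf (s + i) := by
  have h2 : v.IsInfix (substPow theta (k+1) 0) := by
    apply h.trans
    have hsplit0 : substPow theta (k+1) 0 = substPow theta k 0 ++ substPow theta k 1 := by
      show (theta 0).flatMap (substPow theta k) = _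
      simp [theta]
    rw [hsplit0]
    fin_cases a
    · exact (List.prefix_append _ _).isInfix
    · exact (List.suffix_append _ _).isInfix
  rw [(subst_formula (k+1)).1] at h2
  obtain ⟨p, t, heq⟩ := h2
  refine ⟨p.length, fun i _ hi => ?_⟩
  have hlen := congrArg List.length heq
  simp only [List.length_append, List.length_ofFn] at hlen
  have hb : p.length + i < (p ++ v ++ t).length := by simp; omega
  have h4 : (p ++ v ++ t)[p.length + i]'hb = uf (p.length + i) := by
    rw [List.getElem_of_eq heq, List.getElem_ofFn]
  rw [← h4]
  rw [List.getElem_append_left (show p.length + i < (p ++ v).length by simp; omega)]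
  rw [List.getElem_append_right (show p.length ≤ p.length + i by omega)]
  simp

lemma window_uf {x : ℤ → Fin 2} (hx : x ∈ substShift theta) (i : ℤ) (L : ℕ) :
    ∃ s : ℕ, ∀ r : ℕ, r < L → x (i + r) = uf (s + r) := by
  obtain ⟨k, a, hinf⟩ := hx i L
  obtain ⟨s, hs⟩ := infix_P hinf
  refine ⟨s, fun r hr => ?_⟩
  have hlen : (seqWord x i L).length = L := by simp [seqWord]
  have h := hs r (by omega) (by omega)
  simpa [seqWord] using h

lemma exists_block {x : ℤ → Fin 2} (hx : x ∈ substShift theta) (K : ℕ) :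
    ∃ n : ℤ, ∀ r : ℕ, r < 2 ^ K → x (n + r) = uf r := by
  obtain ⟨s, hs⟩ := window_uf hx 0 (2 ^ (K + 2))
  have hpos : 0 < 2 ^ K := Nat.pow_pos (by norm_num)
  set D := s / 2 ^ K with hD
  have e1 : s % 2 ^ K + 2 ^ K * D = s := Nat.mod_add_div s (2 ^ K)
  have e2 : s % 2 ^ K < 2 ^ K := Nat.mod_lt _ hpos
  have key : ∀ ib : ℕ, uf ib = 0 → D + 1 ≤ ib → ib ≤ D + 2 →
      ∃ n : ℤ, ∀ r : ℕ, r < 2 ^ K → x (n + r) = uf r := by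
    intro ib h0 hlb hub
    set m := 2 ^ K * ib - s with hm
    have hmul_lb : 2 ^ K * ib ≥ 2 ^ K * D + 2 ^ K := by
      calc 2 ^ K * ib ≥ 2 ^ K * (D + 1) := Nat.mul_le_mul_left _ hlb
        _ = 2 ^ K * D + 2 ^ K := by ring
    have hmul_ub : 2 ^ K * ib ≤ 2 ^ K * D + 2 * 2 ^ K := by
      calc 2 ^ K * ib ≤ 2 ^ K * (D + 2) := Nat.mul_le_mul_left _ hub
        _ = 2 ^ K * D + 2 * 2 ^ K := by ring
    have hms : s < 2 ^ K * ib := by omega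
    have hm2 : m + 2 ^ K < 2 ^ (K + 2) := by
      have h4 : 2 ^ (K+2) = 4 * 2 ^ K := by rw [pow_succ, pow_succ]; ring
      omega
    refine ⟨(m : ℤ), fun r hr => ?_⟩
    have hcast : (m : ℤ) + r = 0 + ((m + r : ℕ) : ℤ) := by push_cast; ring
    rw [hcast, hs (m + r) (by omega)]
    have he : s + (m + r) = 2 ^ K * ib + r := by omega
    rw [he, uf_block K ib r h0 hr]
  rcases fin2_cases (uf (D + 1)) with h0 | h1
  · exact key (D + 1) h0 (by omega) (by omega)
  · have h2 := uf_adj h1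
    exact key (D + 2) (by simpa [show D + 1 + 1 = D + 2 from rfl] using h2) (by omega) (by omega)

lemma aperiodic {x : ℤ → Fin 2} (hx : x ∈ substShift theta) (q : ℕ) (hq : 0 < q)
    (h : ∀ i : ℤ, x (i + (q : ℤ)) = x i) : False := by
  obtain ⟨e, mm, hodd, hqe⟩ := Nat.exists_eq_two_pow_mul_odd (Nat.pos_iff_ne_zero.mp hq)
  obtain ⟨d, rfl⟩ := hodd
  obtain ⟨s, hs⟩ := window_uf hx 0 (2 ^ (e + 3) + q)
  have p1 : 2 ^ (e+1) = 2 * 2 ^ e := by rw [pow_succ]; ring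
  have p2 : 2 ^ (e+2) = 4 * 2 ^ e := by rw [pow_succ, pow_succ]; ring
  have p3 : 2 ^ (e+3) = 8 * 2 ^ e := by rw [pow_succ, pow_succ, pow_succ]; ring
  have hP1 : 0 < 2 ^ (e+2) := Nat.pow_pos (by norm_num)
  have hP0 : 1 ≤ 2 ^ e := Nat.one_le_two_pow
  set z := (s + 1) / 2 ^ (e + 2) + 1 with hz
  set m1 := 2 ^ (e + 2) * z + 2 ^ (e + 1) with hm1
  have e1 : (s+1) % 2 ^ (e+2) + 2 ^ (e+2) * ((s+1) / 2 ^ (e+2)) = s + 1 :=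
    Nat.mod_add_div _ _
  have e2 : (s+1) % 2 ^ (e+2) < 2 ^ (e+2) := Nat.mod_lt _ hP1
  have ez : 2 ^ (e+2) * z = 2 ^ (e+2) * ((s+1) / 2 ^ (e+2)) + 2 ^ (e+2) := by
    rw [hz]; ring
  have hlb : s + 1 < m1 := by omega
  have hub : m1 ≤ s + 1 + 2 ^ (e + 2) + 2 ^ (e + 1) := by omega
  have hv1 : uf (m1 - 1) = uf (2 ^ (e+1) - 1) := by
    have hform : m1 = 2 ^ (e+1) * (2 * z + 1) := by rw [hm1, p2, p1]; ring
    rw [hform]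
    exact uf_pow_form (e+1) z
  have hv2 : uf (m1 - 1 + q) = uf (2 ^ e - 1) := by
    have expand : m1 + q = 2 ^ e * (2 * (2 * z + d + 1) + 1) := by
      rw [hm1, hqe, p2, p1]; ring
    have hstep : m1 - 1 + q = 2 ^ e * (2 * (2 * z + d + 1) + 1) - 1 := by omega
    rw [hstep]
    exact uf_pow_form e (2 * z + d + 1)
  have hflip : uf (2 ^ (e+1) - 1) = 1 - uf (2 ^ e - 1) := by
    have hstep : 2 ^ (e+1) - 1 = 2 * (2 ^ e - 1) + 1 := by omega
    rw [hstep, uf_two_mul_add_one]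
  set r := m1 - 1 - s with hr
  have hrq : r + q < 2 ^ (e+3) + q := by omega
  have hx1 : x ((r : ℕ) : ℤ) = uf (m1 - 1) := by
    have hh := hs r (by omega)
    simpa [show s + r = m1 - 1 from by omega] using hh
  have hx2 : x (((r + q : ℕ)) : ℤ) = uf (m1 - 1 + q) := by
    have hh := hs (r + q) hrq
    simpa [show s + (r + q) = m1 - 1 + q from by omega] using hh
  have hper : x (((r + q : ℕ)) : ℤ) = x ((r : ℕ) : ℤ) := by
    have hcast : ((r : ℕ) : ℤ) + (q : ℤ) = (((r + q : ℕ)) : ℤ) := by push_cast; ring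
    have hh := h ((r : ℕ) : ℤ)
    rw [hcast] at hh
    exact hh
  rw [hx1, hx2, hv1, hv2, hflip] at hper
  exact fin2_ne_one_sub _ hper


-- ## Chunk 3 : shift basics, Occ, jump

lemma shiftZ_apply (n : ℤ) (x : ℤ → Fin 2) (m : ℤ) : shiftZ n x m = x (m + n) := rfl

lemma shiftMap_eq_shiftZ (x : ℤ → Fin 2) : shiftMap x = shiftZ 1 x := rfl

lemma shiftZ_shiftZ (a b : ℤ) (x : ℤ → Fin 2) :
    shiftZ a (shiftZ b x) = shiftZ (a + b) x := by
  funext m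
  show x (m + a + b) = x (m + (a + b))
  congr 1
  ring

lemma shiftZ_zero (x : ℤ → Fin 2) : shiftZ 0 x = x := by
  funext m
  show x (m + 0) = x m
  congr 1
  ring

lemma shiftMap_iterate (k : ℕ) (x : ℤ → Fin 2) : shiftMap^[k] x = shiftZ (k : ℤ) x := by
  induction k with
  | zero => simpa using (shiftZ_zero x).symm
  | succ k ih =>
    rw [Function.iterate_succ_apply', ih, shiftMap_eq_shiftZ, shiftZ_shiftZ]
    congr 1
    push_cast
    ring_nf

lemma shiftZ_inj {n : ℤ} : Function.Injective (fun y : ℤ → Fin 2 => shiftZ n y) := by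
  intro a b h
  have h' : shiftZ n a = shiftZ n b := h
  have : shiftZ (-n) (shiftZ n a) = shiftZ (-n) (shiftZ n b) := by rw [h']
  rwa [shiftZ_shiftZ, shiftZ_shiftZ, neg_add_cancel, shiftZ_zero, shiftZ_zero] at this

lemma seqWord_shiftZ (m : ℤ) (x : ℤ → Fin 2) (i : ℤ) (n : ℕ) :
    seqWord (shiftZ m x) i n = seqWord x (i + m) n := by
  unfold seqWord
  apply congrArg
  funext j
  show x (i + j + m) = x (i + m + j)
  congr 1
  ring

lemma mem_shift {x : ℤ → Fin 2} (hx : x ∈ substShift theta) (m : ℤ) :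
    shiftZ m x ∈ substShift theta := by
  intro i n
  obtain ⟨k, a, hh⟩ := hx (i + m) n
  exact ⟨k, a, by rwa [seqWord_shiftZ]⟩

/-- Occurrence of the word θ³(a) = abaaabab at position n. -/
def Occ (x : ℤ → Fin 2) (n : ℤ) : Prop := ∀ r : ℕ, r < 8 → x (n + r) = uf r

lemma Occ_shiftZ {x : ℤ → Fin 2} {m n : ℤ} : Occ (shiftZ m x) n ↔ Occ x (n + m) := by
  constructor <;> intro h r hr
  · have hh := h r hr
    rw [shiftZ_apply] at hh
    rwa [show n + m + (r : ℤ) = n + (r : ℤ) + m from by ring]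
  · have hh := h r hr
    rw [shiftZ_apply]
    rwa [show n + (r : ℤ) + m = n + m + (r : ℤ) from by ring]

lemma occ_not_adj {x : ℤ → Fin 2} {n : ℤ} (h : Occ x n) : ¬ Occ x (n + 1) := by
  intro h'
  have a1 := h 2 (by norm_num)
  have a2 := h' 1 (by norm_num)
  rw [show n + 1 + ((1:ℕ) : ℤ) = n + ((2:ℕ) : ℤ) from by push_cast; ring] at a2
  rw [a1, uf2, uf1] at a2
  exact absurd a2 (by decide)

lemma occ_not_pred {x : ℤ → Fin 2} {n : ℤ} (h : Occ x n) (h' : Occ x (n - 1)) : False := by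
  apply occ_not_adj h'
  rwa [show n - 1 + 1 = n from by ring]

lemma seqWord_getElem {x : ℤ → Fin 2} {i : ℤ} {n r : ℕ} (hr : r < n) :
    (seqWord x i n)[r]'(by simpa [seqWord] using hr) = x (i + r) := by
  simp [seqWord, List.getElem_ofFn]

lemma mem_Aset_iff {x : ℤ → Fin 2} (hx : x ∈ substShift theta) : x ∈ Aset ↔ Occ x 0 := by
  have hxa : x ∈ substShift theta ∧ seqWord x 0 8 = [0, 1, 0, 0, 0, 1, 0, 1] ↔
      seqWord x 0 8 = [0, 1, 0, 0, 0, 1, 0, 1] := by simp [hx]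
  show _ ∧ _ ↔ _
  rw [hxa]
  constructor
  · intro h r hr
    have e1 : (seqWord x 0 8)[r]'(by simpa [seqWord] using hr) =
        ([0, 1, 0, 0, 0, 1, 0, 1] : List (Fin 2))[r]'(by simpa using hr) :=
      List.getElem_of_eq h _
    rw [seqWord_getElem hr] at e1
    interval_cases r <;>
      simpa [uf0, uf1, uf2, uf3, uf4, uf5, uf6, uf7] using e1
  · intro h
    apply List.ext_getElem (by simp [seqWord])
    intro r h1 h2
    have hr : r < 8 := by simpa [seqWord] using h1
    rw [seqWord_getElem hr]
    have := h r hr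
    interval_cases r <;>
      simpa [uf0, uf1, uf2, uf3, uf4, uf5, uf6, uf7] using this

lemma mem_shiftA_iff {x : ℤ → Fin 2} (hx : x ∈ substShift theta) :
    x ∈ shiftMap '' Aset ↔ Occ x (-1) := by
  constructor
  · rintro ⟨z, hz, rfl⟩
    have hzX : z ∈ substShift theta := hz.1
    have h0 : Occ z 0 := (mem_Aset_iff hzX).mp hz
    rw [shiftMap_eq_shiftZ, Occ_shiftZ]
    simpa using h0
  · intro h
    refine ⟨shiftZ (-1) x, ?_, ?_⟩
    · have hmem := mem_shift hx (-1)
      exact (mem_Aset_iff hmem).mpr (by rw [Occ_shiftZ]; simpa using h)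
    · rw [shiftMap_eq_shiftZ, shiftZ_shiftZ]
      simpa using shiftZ_zero x

lemma jump_eq {x : ℤ → Fin 2} (hx : x ∈ substShift theta) :
    jump x = if Occ x 0 then 3 else if Occ x (-1) then 1 else 2 := by
  unfold jump
  rw [if_congr (mem_Aset_iff hx) rfl (if_congr (mem_shiftA_iff hx) rfl rfl)]

lemma jump_val3 {x : ℤ → Fin 2} (hx : x ∈ substShift theta) (h0 : Occ x 0) : jump x = 3 := by
  rw [jump_eq hx, if_pos h0]

lemma jump_val1 {x : ℤ → Fin 2} (hx : x ∈ substShift theta) (h0 : ¬ Occ x 0)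
    (h1 : Occ x (-1)) : jump x = 1 := by
  rw [jump_eq hx, if_neg h0, if_pos h1]

lemma jump_val2 {x : ℤ → Fin 2} (hx : x ∈ substShift theta) (h0 : ¬ Occ x 0)
    (h1 : ¬ Occ x (-1)) : jump x = 2 := by
  rw [jump_eq hx, if_neg h0, if_neg h1]

lemma Sspeed_eq (x : ℤ → Fin 2) : Sspeed x = shiftZ (jump x) x := by
  unfold Sspeed
  rw [shiftMap_iterate]

open scoped Classical in
/-- Inverse jump. -/
noncomputable def jinv (x : ℤ → Fin 2) : ℤ :=
  if Occ x (-2) then 1 else if Occ x (-3) then 3 else 2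

noncomputable def Sinv (x : ℤ → Fin 2) : ℤ → Fin 2 := shiftZ (-(jinv x)) x

lemma Sinv_Sspeed {x : ℤ → Fin 2} (hx : x ∈ substShift theta) : Sinv (Sspeed x) = x := by
  rw [Sspeed_eq]
  by_cases h0 : Occ x 0
  · rw [jump_val3 hx h0]
    unfold Sinv jinv
    have hA : ¬ Occ (shiftZ ((3:ℕ) : ℤ) x) (-2) := by
      rw [Occ_shiftZ, show (-2 : ℤ) + ((3:ℕ) : ℤ) = 0 + 1 from by norm_num]
      exact occ_not_adj h0
    have hB : Occ (shiftZ ((3:ℕ) : ℤ) x) (-3) := by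
      rw [Occ_shiftZ, show (-3 : ℤ) + ((3:ℕ) : ℤ) = 0 from by norm_num]
      exact h0
    rw [if_neg hA, if_pos hB, shiftZ_shiftZ, show (-(3:ℤ)) + ((3:ℕ) : ℤ) = 0 from by norm_num,
      shiftZ_zero]
  by_cases h1 : Occ x (-1)
  · rw [jump_val1 hx h0 h1]
    unfold Sinv jinv
    have hA : Occ (shiftZ ((1:ℕ) : ℤ) x) (-2) := by
      rw [Occ_shiftZ, show (-2 : ℤ) + ((1:ℕ) : ℤ) = -1 from by norm_num]
      exact h1
    rw [if_pos hA, shiftZ_shiftZ, show (-(1:ℤ)) + ((1:ℕ) : ℤ) = 0 from by norm_num, shiftZ_zero]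
  · rw [jump_val2 hx h0 h1]
    unfold Sinv jinv
    have hA : ¬ Occ (shiftZ ((2:ℕ) : ℤ) x) (-2) := by
      rw [Occ_shiftZ, show (-2 : ℤ) + ((2:ℕ) : ℤ) = 0 from by norm_num]
      exact h0
    have hB : ¬ Occ (shiftZ ((2:ℕ) : ℤ) x) (-3) := by
      rw [Occ_shiftZ, show (-3 : ℤ) + ((2:ℕ) : ℤ) = -1 from by norm_num]
      exact h1
    rw [if_neg hA, if_neg hB, shiftZ_shiftZ, show (-(2:ℤ)) + ((2:ℕ) : ℤ) = 0 from by norm_num,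
      shiftZ_zero]

lemma Sspeed_Sinv {x : ℤ → Fin 2} (hx : x ∈ substShift theta) : Sspeed (Sinv x) = x := by
  unfold Sinv jinv
  by_cases h2 : Occ x (-2)
  · rw [if_pos h2]
    have hz := mem_shift hx (-(1:ℤ))
    have hocc0 : ¬ Occ (shiftZ (-(1:ℤ)) x) 0 := by
      rw [Occ_shiftZ, show (0 : ℤ) + -1 = (-2) + 1 from by norm_num]
      exact occ_not_adj h2
    have hocc1 : Occ (shiftZ (-(1:ℤ)) x) (-1) := by
      rw [Occ_shiftZ, show (-1 : ℤ) + -1 = -2 from by norm_num]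
      exact h2
    rw [Sspeed_eq, jump_val1 hz hocc0 hocc1, shiftZ_shiftZ,
      show ((1:ℕ) : ℤ) + (-(1:ℤ)) = 0 from by norm_num, shiftZ_zero]
  by_cases h3 : Occ x (-3)
  · rw [if_neg h2, if_pos h3]
    have hz := mem_shift hx (-(3:ℤ))
    have hocc0 : Occ (shiftZ (-(3:ℤ)) x) 0 := by
      rw [Occ_shiftZ, show (0 : ℤ) + -3 = -3 from by norm_num]
      exact h3
    rw [Sspeed_eq, jump_val3 hz hocc0, shiftZ_shiftZ,
      show ((3:ℕ) : ℤ) + (-(3:ℤ)) = 0 from by norm_num, shiftZ_zero]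
  · rw [if_neg h2, if_neg h3]
    have hz := mem_shift hx (-(2:ℤ))
    have hocc0 : ¬ Occ (shiftZ (-(2:ℤ)) x) 0 := by
      rw [Occ_shiftZ, show (0 : ℤ) + -2 = -2 from by norm_num]
      exact h2
    have hocc1 : ¬ Occ (shiftZ (-(2:ℤ)) x) (-1) := by
      rw [Occ_shiftZ, show (-1 : ℤ) + -2 = -3 from by norm_num]
      exact h3
    rw [Sspeed_eq, jump_val2 hz hocc0 hocc1, shiftZ_shiftZ,
      show ((2:ℕ) : ℤ) + (-(2:ℤ)) = 0 from by norm_num, shiftZ_zero]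

lemma Sspeed_mem {x : ℤ → Fin 2} (hx : x ∈ substShift theta) :
    Sspeed x ∈ substShift theta := by
  rw [Sspeed_eq]; exact mem_shift hx _

lemma Sinv_mem {x : ℤ → Fin 2} (hx : x ∈ substShift theta) :
    Sinv x ∈ substShift theta := by
  unfold Sinv; exact mem_shift hx _

-- ## continuity

lemma continuous_shiftZ (c : ℤ) : Continuous (fun y : ℤ → Fin 2 => shiftZ c y) :=
  continuous_pi fun m => continuous_apply (m + c)

lemma cylinder_open (x : ℤ → Fin 2) (a b : ℤ) :
    IsOpen {y : ℤ → Fin 2 | ∀ i ∈ Finset.Icc a b, y i = x i} := by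
  have he : {y : ℤ → Fin 2 | ∀ i ∈ Finset.Icc a b, y i = x i} =
      ⋂ i ∈ (Finset.Icc a b : Finset ℤ), {y : ℤ → Fin 2 | y i = x i} := by
    ext y; simp
  rw [he]
  apply isOpen_biInter_finset
  intro i _
  have hpre : {y : ℤ → Fin 2 | y i = x i} = (fun y : ℤ → Fin 2 => y i) ⁻¹' ({x i} : Set (Fin 2)) := by
    ext y; simp
  rw [hpre]
  exact (continuous_apply i).isOpen_preimage _ (isOpen_discrete _)

lemma occ_congr {x y : ℤ → Fin 2} {n : ℤ} (h : ∀ i : ℤ, n ≤ i → i ≤ n + 7 → y i = x i) :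
    Occ y n ↔ Occ x n := by
  constructor <;> intro hh r hr
  · rw [← h (n + r) (by omega) (by omega)]
    exact hh r hr
  · rw [h (n + r) (by omega) (by omega)]
    exact hh r hr

lemma jump_congr {x y : ℤ → Fin 2} (hx : x ∈ substShift theta) (hy : y ∈ substShift theta)
    (h : ∀ i ∈ Finset.Icc (-1 : ℤ) 7, y i = x i) : jump y = jump x := by
  have h0 : Occ y 0 ↔ Occ x 0 :=
    occ_congr fun i h1 h2 => h i (by simp; omega)
  have h1 : Occ y (-1) ↔ Occ x (-1) :=
    occ_congr fun i h1 h2 => h i (by simp; omega)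
  rw [jump_eq hx, jump_eq hy, if_congr h0 rfl (if_congr h1 rfl rfl)]

lemma jinv_congr {x y : ℤ → Fin 2}
    (h : ∀ i ∈ Finset.Icc (-3 : ℤ) 5, y i = x i) : jinv y = jinv x := by
  have h2 : Occ y (-2) ↔ Occ x (-2) :=
    occ_congr fun i h1 h2 => h i (by simp; omega)
  have h3 : Occ y (-3) ↔ Occ x (-3) :=
    occ_congr fun i h1 h2 => h i (by simp; omega)
  unfold jinv
  rw [if_congr h2 rfl (if_congr h3 rfl rfl)]

lemma continuousOn_jump : ContinuousOn jump (substShift theta) := by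
  intro x hx
  have hVx : {y : ℤ → Fin 2 | ∀ i ∈ Finset.Icc (-1:ℤ) 7, y i = x i} ∈ 𝓝[substShift theta] x :=
    mem_nhdsWithin_of_mem_nhds ((cylinder_open x (-1) 7).mem_nhds (fun i _ => rfl))
  have heq : (fun y => jump y) =ᶠ[𝓝[substShift theta] x] (fun _ => jump x) := by
    filter_upwards [hVx, self_mem_nhdsWithin] with y hy hyX
    exact jump_congr hx hyX hy
  exact (continuousWithinAt_const (b := jump x)).congr_of_eventuallyEq heq rfl

lemma continuousOn_Sspeed : ContinuousOn Sspeed (substShift theta) := by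
  intro x hx
  have hVx : {y : ℤ → Fin 2 | ∀ i ∈ Finset.Icc (-1:ℤ) 7, y i = x i} ∈ 𝓝[substShift theta] x :=
    mem_nhdsWithin_of_mem_nhds ((cylinder_open x (-1) 7).mem_nhds (fun i _ => rfl))
  have heq : Sspeed =ᶠ[𝓝[substShift theta] x] (fun y => shiftZ ((jump x : ℕ) : ℤ) y) := by
    filter_upwards [hVx, self_mem_nhdsWithin] with y hy hyX
    rw [Sspeed_eq, jump_congr hx hyX hy]
  exact ((continuous_shiftZ _).continuousWithinAt).congr_of_eventuallyEq heq (Sspeed_eq x)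

lemma continuousOn_Sinv : ContinuousOn Sinv (substShift theta) := by
  intro x hx
  have hVx : {y : ℤ → Fin 2 | ∀ i ∈ Finset.Icc (-3:ℤ) 5, y i = x i} ∈ 𝓝[substShift theta] x :=
    mem_nhdsWithin_of_mem_nhds ((cylinder_open x (-3) 5).mem_nhds (fun i _ => rfl))
  have heq : Sinv =ᶠ[𝓝[substShift theta] x] (fun y => shiftZ (-(jinv x)) y) := by
    filter_upwards [hVx, self_mem_nhdsWithin] with y hy hyX
    show Sinv y = _
    unfold Sinv
    rw [jinv_congr hy]
  exact ((continuous_shiftZ _).continuousWithinAt).congr_of_eventuallyEq heq rfl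



-- ## Chunk 4 : the parity cocycle psi

lemma z2_add_self (z : ZMod 2) : z + z = 0 := by revert z; decide
lemma z2_cases (z : ZMod 2) : z = 0 ∨ z = 1 := by revert z; decide

open scoped Classical in
noncomputable def ind (x : ℤ → Fin 2) (k : ℤ) : ZMod 2 := if Occ x (k - 1) then 1 else 0

open scoped Classical in
noncomputable def psi (x : ℤ → Fin 2) (n : ℤ) : ZMod 2 :=
  (n : ZMod 2) + (if 0 ≤ n then ∑ k ∈ Finset.Ico (0 : ℤ) n, ind x k
                  else ∑ k ∈ Finset.Ico n (0 : ℤ), ind x k)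

lemma psi_zero (x : ℤ → Fin 2) : psi x 0 = 0 := by
  unfold psi
  simp

lemma ind_eq_one {x : ℤ → Fin 2} {k : ℤ} (h : Occ x (k - 1)) : ind x k = 1 := by
  unfold ind; rw [if_pos h]

lemma ind_eq_zero {x : ℤ → Fin 2} {k : ℤ} (h : ¬ Occ x (k - 1)) : ind x k = 0 := by
  unfold ind; rw [if_neg h]

lemma sum_Ico_glue (f : ℤ → ZMod 2) {a b c : ℤ} (h1 : a ≤ b) (h2 : b ≤ c) :
    ∑ k ∈ Finset.Ico a b, f k + ∑ k ∈ Finset.Ico b c, f k = ∑ k ∈ Finset.Ico a c, f k := by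
  rw [← Finset.sum_union (Finset.Ico_disjoint_Ico_consecutive a b c),
    Finset.Ico_union_Ico_eq_Ico h1 h2]

lemma psi_diff (x : ℤ → Fin 2) {a b : ℤ} (h : a ≤ b) :
    psi x b = psi x a + ((b - a : ℤ) : ZMod 2) + ∑ k ∈ Finset.Ico a b, ind x k := by
  unfold psi
  rcases le_or_gt 0 a with ha | ha
  · rw [if_pos ha, if_pos (le_trans ha h)]
    rw [← sum_Ico_glue (fun k => ind x k) ha h]
    push_cast
    ring
  · rcases le_or_gt 0 b with hb | hb
    · rw [if_neg (show ¬ (0:ℤ) ≤ a by omega), if_pos hb]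
      rw [← sum_Ico_glue (fun k => ind x k) (show a ≤ (0:ℤ) by omega) hb]
      push_cast
      generalize ((a : ℤ) : ZMod 2) = A
      generalize ((b : ℤ) : ZMod 2) = B
      generalize (∑ k ∈ Finset.Ico a (0:ℤ), ind x k) = S1
      generalize (∑ k ∈ Finset.Ico (0:ℤ) b, ind x k) = S2
      revert A B S1 S2
      decide
    · rw [if_neg (show ¬ (0:ℤ) ≤ b by omega), if_neg (show ¬ (0:ℤ) ≤ a by omega)]
      rw [show (∑ k ∈ Finset.Ico a (0:ℤ), ind x k)
          = ∑ k ∈ Finset.Ico a b, ind x k + ∑ k ∈ Finset.Ico b (0:ℤ), ind x k from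
        (sum_Ico_glue (fun k => ind x k) h (show b ≤ (0:ℤ) by omega)).symm]
      push_cast
      generalize ((a : ℤ) : ZMod 2) = A
      generalize ((b : ℤ) : ZMod 2) = B
      generalize (∑ k ∈ Finset.Ico a b, ind x k) = S1
      generalize (∑ k ∈ Finset.Ico b (0:ℤ), ind x k) = S2
      revert A B S1 S2
      decide

lemma psi_step (x : ℤ → Fin 2) (n : ℤ) : psi x (n + 1) = psi x n + 1 + ind x n := by
  have h := psi_diff x (show n ≤ n + 1 by omega)
  have hs : Finset.Ico n (n + 1) = {n} := by
    ext k
    simp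
    omega
  rw [hs, Finset.sum_singleton] at h
  simpa using h

-- the key one-step analysis
lemma step_core {x : ℤ → Fin 2} (hx : x ∈ substShift theta) (n : ℤ) :
    ∃ j : ℤ, 1 ≤ j ∧ j ≤ 3 ∧ Sspeed (shiftZ n x) = shiftZ (n + j) x ∧
      psi x (n + j) = psi x n ∧ ∀ m : ℤ, n < m → m < n + j → psi x m ≠ psi x n := by
  have hzX := mem_shift hx n
  have hocc0 : Occ (shiftZ n x) 0 ↔ Occ x n := by rw [Occ_shiftZ, zero_add]
  have hocc1 : Occ (shiftZ n x) (-1) ↔ Occ x (n - 1) := by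
    rw [Occ_shiftZ, show (-1 : ℤ) + n = n - 1 from by ring]
  by_cases h0 : Occ x n
  · refine ⟨3, by norm_num, by norm_num, ?_, ?_, ?_⟩
    · rw [Sspeed_eq, jump_val3 hzX (hocc0.mpr h0), shiftZ_shiftZ]
      congr 1
      push_cast
      ring
    all_goals {
      have i0 : ind x n = 0 := ind_eq_zero (fun hc => occ_not_pred h0 hc)
      have i1 : ind x (n + 1) = 1 := ind_eq_one (by rwa [show n + 1 - 1 = n from by ring])
      have i2 : ind x (n + 2) = 0 := ind_eq_zero (by
        rw [show n + 2 - 1 = n + 1 from by ring]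
        exact occ_not_adj h0)
      have hp1 : psi x (n + 1) = psi x n + 1 := by
        rw [psi_step, i0]
        ring
      have hp2 : psi x (n + 2) = psi x n + 1 := by
        have h := psi_step x (n + 1)
        rw [show n + 1 + 1 = n + 2 from by ring, hp1, i1] at h
        rw [h]
        generalize psi x n = p
        revert p
        decide
      have hp3 : psi x (n + 3) = psi x n := by
        have h := psi_step x (n + 2)
        rw [show n + 2 + 1 = n + 3 from by ring, hp2, i2] at h
        rw [h]
        generalize psi x n = p
        revert p
        decide
      first
      | exact hp3
      | { intro m hm1 hm2
          have : m = n + 1 ∨ m = n + 2 := by omega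
          rcases this with rfl | rfl
          · rw [hp1]
            generalize psi x n = p
            revert p
            decide
          · rw [hp2]
            generalize psi x n = p
            revert p
            decide }
    }
  by_cases h1 : Occ x (n - 1)
  · refine ⟨1, by norm_num, by norm_num, ?_, ?_, ?_⟩
    · rw [Sspeed_eq, jump_val1 hzX (fun hc => h0 (hocc0.mp hc)) (hocc1.mpr h1), shiftZ_shiftZ]
      congr 1
      push_cast
      ring
    · have i0 : ind x n = 1 := ind_eq_one h1
      rw [psi_step, i0]
      generalize psi x n = p
      revert p
      decide
    · intro m hm1 hm2
      omega
  · refine ⟨2, by norm_num, by norm_num, ?_, ?_, ?_⟩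
    · rw [Sspeed_eq, jump_val2 hzX (fun hc => h0 (hocc0.mp hc)) (fun hc => h1 (hocc1.mp hc)),
        shiftZ_shiftZ]
      congr 1
      push_cast
      ring
    all_goals {
      have i0 : ind x n = 0 := ind_eq_zero h1
      have i1 : ind x (n + 1) = 0 := ind_eq_zero (by rwa [show n + 1 - 1 = n from by ring])
      have hp1 : psi x (n + 1) = psi x n + 1 := by
        rw [psi_step, i0]
        ring
      have hp2 : psi x (n + 2) = psi x n := by
        have h := psi_step x (n + 1)
        rw [show n + 1 + 1 = n + 2 from by ring, hp1, i1] at h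
        rw [h]
        generalize psi x n = p
        revert p
        decide
      first
      | exact hp2
      | { intro m hm1 hm2
          have hm : m = n + 1 := by omega
          subst hm
          rw [hp1]
          generalize psi x n = p
          revert p
          decide }
    }

lemma iter_psi {x : ℤ → Fin 2} (hx : x ∈ substShift theta) (k : ℕ) : ∀ n : ℤ,
    ∃ m : ℤ, n ≤ m ∧ Sspeed^[k] (shiftZ n x) = shiftZ m x ∧ psi x m = psi x n := by
  induction k with
  | zero => exact fun n => ⟨n, le_refl _, by simp, rfl⟩
  | succ k ih =>
    intro n
    obtain ⟨j, hj1, hj3, hS, hψ, _⟩ := step_core hx n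
    obtain ⟨m, hm1, hm2, hm3⟩ := ih (n + j)
    exact ⟨m, by omega, by rw [Function.iterate_succ_apply, hS, hm2],
      by rw [hm3, hψ]⟩

lemma reach {x : ℤ → Fin 2} (hx : x ∈ substShift theta) : ∀ (N : ℕ) (a b : ℤ), a ≤ b →
    (b - a).toNat ≤ N → psi x a = psi x b →
    ∃ k : ℕ, Sspeed^[k] (shiftZ a x) = shiftZ b x := by
  intro N
  induction N with
  | zero =>
    intro a b hab hN hψ
    have : a = b := by omega
    subst this
    exact ⟨0, by simp⟩
  | succ N ih =>
    intro a b hab hN hψ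
    rcases eq_or_lt_of_le hab with rfl | hlt
    · exact ⟨0, by simp⟩
    · obtain ⟨j, hj1, hj3, hS, hψj, hmid⟩ := step_core hx a
      have hle : a + j ≤ b := by
        by_contra hcon
        push_neg at hcon
        exact (hmid b hlt hcon) hψ.symm
      obtain ⟨k, hk⟩ := ih (a + j) b hle (by omega) (by rw [hψj]; exact hψ)
      exact ⟨k + 1, by rw [Function.iterate_succ_apply, hS, hk]⟩

lemma shift_inj_pt {x : ℤ → Fin 2} (hx : x ∈ substShift theta) {n m : ℤ}
    (h : shiftZ n x = shiftZ m x) : n = m := by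
  by_contra hne
  have key : ∀ a b : ℤ, a < b → shiftZ a x = shiftZ b x → False := by
    intro a b hab heq
    set q := (b - a).toNat with hqdef
    have hq : 0 < q := by omega
    have hcast : ((q : ℕ) : ℤ) = b - a := by omega
    apply aperiodic hx q hq
    intro i
    have e1 := congrFun heq (i - a)
    have e2 : x (i - a + a) = x (i - a + b) := e1
    rw [show i - a + a = i from by ring] at e2
    rw [show i - a + b = i + ((q : ℕ) : ℤ) from by omega] at e2
    exact e2.symm
  rcases lt_or_gt_of_ne hne with h1 | h1
  · exact key n m h1 h
  · exact key m n h1 h.symm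

lemma orbit_char {x : ℤ → Fin 2} (hx : x ∈ substShift theta) (y : ℤ → Fin 2) :
    y ∈ orbitIn Sspeed (substShift theta) x ↔
      ∃ n : ℤ, psi x n = 0 ∧ shiftZ n x = y := by
  constructor
  · rintro ⟨hyX, k, hk | hk⟩
    · obtain ⟨m, _, hm2, hm3⟩ := iter_psi hx k 0
      rw [shiftZ_zero] at hm2
      exact ⟨m, by rw [hm3, psi_zero], by rw [← hk, hm2]⟩
    · obtain ⟨m, hm0, hm2, _⟩ := iter_psi hyX k 0
      rw [shiftZ_zero] at hm2
      have hmx : shiftZ m y = x := by rw [← hm2, hk]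
      have hyx : shiftZ (-m) x = y := by
        rw [← hmx, shiftZ_shiftZ, neg_add_cancel, shiftZ_zero]
      obtain ⟨m', hm'0, hm'2, hm'3⟩ := iter_psi hx k (-m)
      rw [hyx, hk] at hm'2
      have hm'z : m' = 0 := (shift_inj_pt hx (by rw [← hm'2, shiftZ_zero])).symm
      refine ⟨-m, ?_, hyx⟩
      rw [← hm'3, hm'z, psi_zero]
  · rintro ⟨n, hψ, rfl⟩
    refine ⟨mem_shift hx n, ?_⟩
    rcases le_or_gt 0 n with h | h
    · obtain ⟨k, hk⟩ := reach hx (n.toNat) 0 n h (by omega) (by rw [psi_zero, hψ])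
      rw [shiftZ_zero] at hk
      exact ⟨k, Or.inl hk⟩
    · obtain ⟨k, hk⟩ := reach hx ((-n).toNat) n 0 (by omega) (by omega)
        (by rw [psi_zero, hψ])
      rw [shiftZ_zero] at hk
      exact ⟨k, Or.inr hk⟩

lemma ind_shiftZ (x : ℤ → Fin 2) (c m : ℤ) : ind (shiftZ c x) m = ind x (m + c) := by
  unfold ind
  rw [if_congr (by rw [Occ_shiftZ, show m - 1 + c = m + c - 1 from by ring]) rfl rfl]

lemma z2_rearrange (a b f : ZMod 2) (h : b = a + 1 + f) : a = b + 1 + f := by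
  subst h
  revert a f
  decide

lemma psi_base (x : ℤ → Fin 2) (c : ℤ) : ∀ m : ℤ, psi (shiftZ c x) m = psi x (c + m) + psi x c := by
  intro m
  induction m using Int.induction_on with
  | zero =>
    rw [psi_zero, add_zero]
    exact (z2_add_self _).symm
  | succ k ih =>
    rw [psi_step, ih, ind_shiftZ]
    have hs := psi_step x (c + k)
    rw [show c + (k : ℤ) + 1 = c + ((k : ℤ) + 1) from by ring] at hs
    rw [hs, show (k : ℤ) + c = c + (k : ℤ) from by ring]
    ring
  | pred k ih =>
    have hsz := psi_step (shiftZ c x) (-(k : ℤ) - 1)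
    rw [show -(k : ℤ) - 1 + 1 = -(k : ℤ) from by ring] at hsz
    have hsx := psi_step x (c + (-(k : ℤ) - 1))
    rw [show c + (-(k : ℤ) - 1) + 1 = c + -(k : ℤ) from by ring] at hsx
    have hA := z2_rearrange _ _ _ hsz
    have hB := z2_rearrange _ _ _ hsx
    show psi (shiftZ c x) (-(k : ℤ) - 1) = psi x (c + (-(k : ℤ) - 1)) + psi x c
    rw [hA, hB, ih, ind_shiftZ]
    rw [show -(k : ℤ) - 1 + c = c + (-(k : ℤ) - 1) from by ring]
    ring

lemma psi_both_near (x : ℤ → Fin 2) (n : ℤ) :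
    ∃ m : ℤ, n ≤ m ∧ m ≤ n + 2 ∧ psi x m = psi x n + 1 := by
  rcases z2_cases (ind x n) with h | h
  · refine ⟨n + 1, by omega, by omega, ?_⟩
    rw [psi_step, h]
    ring
  · have h1 : Occ x (n - 1) := by
      by_contra hc
      rw [ind_eq_zero hc] at h
      exact absurd h (by decide)
    have h2 : ind x (n + 1) = 0 := ind_eq_zero (by
      rw [show n + 1 - 1 = n from by ring]
      intro hc
      exact occ_not_pred hc h1)
    refine ⟨n + 2, by omega, by omega, ?_⟩
    have e1 := psi_step x n
    have e2 := psi_step x (n + 1)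
    rw [show n + 1 + 1 = n + 2 from by ring, e1, h, h2] at e2
    rw [e2]
    generalize psi x n = p
    revert p
    decide


-- ## Chunk 5 : counting occurrences, both parities

noncomputable def cz (t L : ℕ) : ZMod 2 :=
  ∑ i ∈ Finset.range L, (if uf (t + i) = 0 then (1 : ZMod 2) else 0)

lemma z2_cancel (A B F : ZMod 2) (h : A + F = B + F) : A = B := by
  revert A B F
  decide

lemma cz_double (u L : ℕ) : cz (2 * u) (2 * L) = cz u L := by
  induction L with
  | zero => simp [cz]
  | succ L ih =>
    have e : 2 * (L + 1) = (2 * L + 1) + 1 := by ring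
    unfold cz at *
    rw [e, Finset.sum_range_succ, Finset.sum_range_succ, Finset.sum_range_succ, ih]
    have h1 : uf (2 * u + 2 * L) = 0 := by
      rw [show 2 * u + 2 * L = 2 * (u + L) from by ring, uf_two_mul]
    have h2 : uf (2 * u + (2 * L + 1)) = 1 - uf (u + L) := by
      rw [show 2 * u + (2 * L + 1) = 2 * (u + L) + 1 from by ring, uf_two_mul_add_one]
    rw [h1, h2, if_pos rfl]
    rcases fin2_cases (uf (u + L)) with hz | hz
    · rw [hz, if_neg (show ¬((1 : Fin 2) - 0 = 0) by decide), if_pos rfl]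
      ring
    · rw [hz, if_pos (show ((1 : Fin 2) - 1 = 0) by decide),
        if_neg (show ¬((1 : Fin 2) = 0) by decide)]
      generalize (∑ i ∈ Finset.range L, if uf (u + i) = 0 then (1 : ZMod 2) else 0) = S
      revert S
      decide

lemma cz_succ_start (t L : ℕ) :
    cz (t + 1) L + (if uf t = 0 then (1 : ZMod 2) else 0)
      = cz t L + (if uf (t + L) = 0 then (1 : ZMod 2) else 0) := by
  unfold cz
  have h1 : (∑ i ∈ Finset.range (L + 1), (if uf (t + i) = 0 then (1 : ZMod 2) else 0))
      = (∑ i ∈ Finset.range L, (if uf (t + i) = 0 then (1 : ZMod 2) else 0))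
        + (if uf (t + L) = 0 then (1 : ZMod 2) else 0) := Finset.sum_range_succ _ _
  have h2 : (∑ i ∈ Finset.range (L + 1), (if uf (t + i) = 0 then (1 : ZMod 2) else 0))
      = (∑ i ∈ Finset.range L, (if uf (t + (i + 1)) = 0 then (1 : ZMod 2) else 0))
        + (if uf (t + 0) = 0 then (1 : ZMod 2) else 0) := Finset.sum_range_succ' _ _
  have h3 : (∑ i ∈ Finset.range L, (if uf (t + (i + 1)) = 0 then (1 : ZMod 2) else 0))
      = (∑ i ∈ Finset.range L, (if uf (t + 1 + i) = 0 then (1 : ZMod 2) else 0)) := by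
    apply Finset.sum_congr rfl
    intro i _
    rw [show t + (i + 1) = t + 1 + i from by ring]
  rw [h3] at h2
  rw [show t + 0 = t from by ring] at h2
  show (∑ i ∈ Finset.range L, (if uf (t + 1 + i) = 0 then (1 : ZMod 2) else 0))
      + (if uf t = 0 then (1 : ZMod 2) else 0)
    = (∑ i ∈ Finset.range L, (if uf (t + i) = 0 then (1 : ZMod 2) else 0))
      + (if uf (t + L) = 0 then (1 : ZMod 2) else 0)
  rw [← h2, h1]

lemma cz_shift (m : ℕ) : ∀ d : ℕ, d ≤ 2 ^ m → cz (2 * 2 ^ m + d) (2 ^ m) = cz (2 * 2 ^ m) (2 ^ m) := by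
  intro d
  induction d with
  | zero => intro _; rfl
  | succ d ih =>
    intro hd
    have hih := ih (by omega)
    have hkey := cz_succ_start (2 * 2 ^ m + d) (2 ^ m)
    have huf : uf (2 * 2 ^ m + d) = uf (2 * 2 ^ m + d + 2 ^ m) := by
      rw [show 2 * 2 ^ m + d + 2 ^ m = 3 * 2 ^ m + d from by ring]
      exact uf23 m d (by omega)
    rw [← huf] at hkey
    have := z2_cancel _ _ _ hkey
    rw [show 2 * 2 ^ m + (d + 1) = 2 * 2 ^ m + d + 1 from by ring, this, hih]

lemma cz_A : ∀ m : ℕ, cz (2 * 2 ^ m) (2 ^ m) = 1 := by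
  intro m
  induction m with
  | zero =>
    show (∑ i ∈ Finset.range 1, if uf (2 * 2 ^ 0 + i) = 0 then (1 : ZMod 2) else 0) = 1
    rw [Finset.sum_range_one]
    rw [show 2 * 2 ^ 0 + 0 = 2 from by norm_num, uf2, if_pos rfl]
  | succ m ih =>
    have e : 2 ^ (m + 1) = 2 * 2 ^ m := by rw [pow_succ]; ring
    rw [e, show 2 * (2 * 2 ^ m) = 2 * (2 * 2 ^ m) from rfl]
    rw [show (2 : ℕ) * (2 * 2 ^ m) = 2 * (2 * 2 ^ m) from rfl]
    calc cz (2 * (2 * 2 ^ m)) (2 * 2 ^ m) = cz (2 * 2 ^ m) (2 ^ m) := by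
          have := cz_double (2 * 2 ^ m) (2 ^ m)
          rwa [show 2 * (2 ^ m) = 2 * 2 ^ m from rfl] at this
      _ = 1 := ih

/-- Occurrence of the 8-letter word in `uf` itself. -/
def OccU (j : ℕ) : Prop := ∀ r : ℕ, r < 8 → uf (j + r) = uf r

lemma occU_iff (j : ℕ) : OccU j ↔ 8 ∣ j ∧ uf (j / 8) = 0 := by
  constructor
  · intro h
    have h1 := h 1 (by norm_num)
    have h3 := h 3 (by norm_num)
    have h7 := h 7 (by norm_num)
    rw [uf1] at h1
    rw [uf3] at h3
    rw [uf7] at h7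
    have hj2 : j % 2 = 0 := by
      have := uf_ne_zero_odd (n := j + 1) (by rw [h1]; decide)
      omega
    obtain ⟨h1', rfl⟩ : ∃ h', j = 2 * h' := ⟨j / 2, by omega⟩
    have e3 : uf (2 * h1' + 3) = 1 - uf (h1' + 1) := by
      rw [show 2 * h1' + 3 = 2 * (h1' + 1) + 1 from by ring, uf_two_mul_add_one]
    rw [e3] at h3
    have hh1 : uf (h1' + 1) = 1 := by
      rcases fin2_cases (uf (h1' + 1)) with hz | hz
      · rw [hz] at h3
        exact absurd h3 (by decide)
      · exact hz
    have hh2 : h1' % 2 = 0 := by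
      have := uf_ne_zero_odd (n := h1' + 1) (by rw [hh1]; decide)
      omega
    obtain ⟨g, rfl⟩ : ∃ g, h1' = 2 * g := ⟨h1' / 2, by omega⟩
    have e7 : uf (2 * (2 * g) + 7) = 1 - uf (2 * g + 3) := by
      rw [show 2 * (2 * g) + 7 = 2 * (2 * g + 3) + 1 from by ring, uf_two_mul_add_one]
    have e7b : uf (2 * g + 3) = 1 - uf (g + 1) := by
      rw [show 2 * g + 3 = 2 * (g + 1) + 1 from by ring, uf_two_mul_add_one]
    rw [e7, e7b] at h7
    have hg1 : uf (g + 1) = 1 := by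
      rcases fin2_cases (uf (g + 1)) with hz | hz
      · rw [hz] at h7
        exact absurd h7 (by decide)
      · exact hz
    have hg2 : g % 2 = 0 := by
      have := uf_ne_zero_odd (n := g + 1) (by rw [hg1]; decide)
      omega
    obtain ⟨i, rfl⟩ : ∃ i, g = 2 * i := ⟨g / 2, by omega⟩
    have hgg : uf (2 * i + 1) = 1 - uf i := uf_two_mul_add_one i
    rw [show 2 * i + 1 = 2 * i + 1 from rfl] at hg1
    have hi0 : uf i = 0 := by
      rcases fin2_cases (uf i) with hz | hz
      · exact hz
      · rw [hgg, hz] at hg1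
        exact absurd hg1 (by decide)
    refine ⟨⟨i, by ring⟩, ?_⟩
    rw [show 2 * (2 * (2 * i)) / 8 = i from by omega]
    exact hi0
  · rintro ⟨⟨i, rfl⟩, hu⟩
    intro r hr
    rw [show 8 * i = 2 ^ 3 * i from by norm_num]
    exact uf_block 3 i r (by rwa [show 8 * i / 8 = i from by omega] at hu)
      (by have h8 : (2:ℕ) ^ 3 = 8 := by norm_num
          omega)

open scoped Classical in
lemma occU_term_zero {n : ℕ} (hnd : ¬ 8 ∣ n) : (if OccU n then (1 : ZMod 2) else 0) = 0 := by
  rw [if_neg]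
  rw [occU_iff]
  tauto

open scoped Classical in
lemma occU_term_dvd {n : ℕ} (hnd : 8 ∣ n) :
    (if OccU n then (1 : ZMod 2) else 0) = (if uf (n / 8) = 0 then (1 : ZMod 2) else 0) := by
  by_cases h : uf (n / 8) = 0
  · rw [if_pos ((occU_iff n).mpr ⟨hnd, h⟩), if_pos h]
  · rw [if_neg (fun hc => h ((occU_iff n).mp hc).2), if_neg h]

open scoped Classical in
lemma occ_sum_count (a : ℕ) : ∀ L' : ℕ,
    ∑ j ∈ Finset.range (8 * L'), (if OccU (a + j) then (1 : ZMod 2) else 0)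
      = cz ((a + 7) / 8) L' := by
  intro L'
  induction L' with
  | zero => simp [cz]
  | succ L ih =>
    have e : 8 * (L + 1) = 8 * L + 8 := by ring
    set ρ := (8 - a % 8) % 8 with hρdef
    have hρ : ρ < 8 := by omega
    have hdiv : 8 * ((a + 7) / 8) = a + ρ := by omega
    have hsingle : ∀ t ∈ Finset.range 8, t ≠ ρ →
        (if OccU (a + (8 * L + t)) then (1 : ZMod 2) else 0) = 0 := by
      intro t ht hne
      apply occU_term_zero
      simp only [Finset.mem_range] at ht
      omega
    rw [e, Finset.sum_range_add, ih,
      Finset.sum_eq_single_of_mem ρ (Finset.mem_range.mpr hρ) hsingle]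
    unfold cz
    rw [Finset.sum_range_succ]
    congr 1
    rw [occU_term_dvd (by omega)]
    have hidx : (a + (8 * L + ρ)) / 8 = (a + 7) / 8 + L := by omega
    rw [hidx]


-- ## Chunk 6 : occurrences at a psi-zero position (minimality core)

lemma sum_Ico_int (f : ℤ → ZMod 2) (a : ℤ) (L : ℕ) :
    ∑ k ∈ Finset.Ico a (a + (L : ℤ)), f k = ∑ j ∈ Finset.range L, f (a + (j : ℤ)) := by
  induction L with
  | zero => simp
  | succ L ih =>
    have hins : Finset.Ico a (a + ((L + 1 : ℕ) : ℤ)) =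
        insert (a + (L : ℤ)) (Finset.Ico a (a + (L : ℤ))) := by
      ext k
      simp only [Finset.mem_Ico, Finset.mem_insert]
      push_cast
      omega
    rw [hins, Finset.sum_insert (by simp [Finset.mem_Ico])]
    rw [ih, Finset.sum_range_succ]
    ring

lemma key_occurrence {x y : ℤ → Fin 2} (hx : x ∈ substShift theta)
    (hy : y ∈ substShift theta) (M : ℕ) :
    ∃ n : ℤ, psi x n = 0 ∧ ∀ i : ℤ, -(M : ℤ) ≤ i → i ≤ (M : ℤ) → shiftZ n x i = y i := by
  obtain ⟨s, hs⟩ := window_uf hy (-(M : ℤ)) (2 * M + 1)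
  set m₀ := s + 2 * M + 9 with hm₀
  set G := m₀ + 3 with hGdef
  have hG : s + 2 * M + 9 < 2 ^ G := by
    calc s + 2 * M + 9 = m₀ := rfl
      _ < 2 ^ m₀ := Nat.lt_two_pow_self
      _ ≤ 2 ^ G := Nat.pow_le_pow_right (by norm_num) (by omega)
  set c := s + M with hc
  have hG8 : 2 ^ G = 8 * 2 ^ m₀ := by
    rw [hGdef, pow_add]
    ring
  have hG83 : 2 ^ (G + 3) = 8 * 2 ^ G := by
    rw [pow_add]
    ring
  obtain ⟨n₀, hblk⟩ := exists_block hx (G + 3)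
  have hocc_eq : ∀ t : ℕ, t + 8 ≤ 2 ^ (G + 3) → (Occ x (n₀ + (t : ℤ)) ↔ OccU t) := by
    intro t htb
    constructor <;> intro hh r hr
    · have h1 := hh r hr
      have hbv := hblk (t + r) (by omega)
      rw [show n₀ + (t : ℤ) + (r : ℤ) = n₀ + ((t + r : ℕ) : ℤ) from by push_cast; ring] at h1
      rw [hbv] at h1
      exact h1
    · have hbv := hblk (t + r) (by omega)
      rw [show n₀ + (t : ℤ) + (r : ℤ) = n₀ + ((t + r : ℕ) : ℤ) from by push_cast; ring, hbv]
      exact hh r hr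
  -- agreement of the two candidate windows with y
  have hagree : ∀ jj : ℕ, 2 ≤ jj → jj ≤ 3 → uf jj = 0 →
      ∀ i : ℤ, -(M : ℤ) ≤ i → i ≤ (M : ℤ) →
        shiftZ (n₀ + ((jj * 2 ^ G + c : ℕ) : ℤ)) x i = y i := by
    intro jj h2j hj3 hufj i hi1 hi2
    obtain ⟨t, ht1, ht2⟩ : ∃ t : ℕ, (t : ℤ) = i + M ∧ t ≤ 2 * M :=
      ⟨(i + (M : ℤ)).toNat, by omega, by omega⟩
    have hidx : i + (n₀ + ((jj * 2 ^ G + c : ℕ) : ℤ)) = n₀ + ((jj * 2 ^ G + s + t : ℕ) : ℤ) := by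
      push_cast
      omega
    have hb : jj * 2 ^ G + s + t < 2 ^ (G + 3) := by
      have : jj * 2 ^ G ≤ 3 * 2 ^ G := Nat.mul_le_mul_right _ hj3
      omega
    show x (i + (n₀ + ((jj * 2 ^ G + c : ℕ) : ℤ))) = y i
    rw [hidx, hblk _ hb]
    have hst : s + t < 2 ^ G := by omega
    have hbl := uf_block G jj (s + t) hufj hst
    rw [show jj * 2 ^ G + s + t = 2 ^ G * jj + (s + t) from by ring, hbl]
    have hyv := hs t (by omega)
    rw [show -(M : ℤ) + (t : ℤ) = i from by omega] at hyv
    exact hyv.symm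
  -- the psi difference between the two candidates
  set a₀ : ℕ := 2 * 2 ^ G + c - 1 with ha₀
  have hν : 2 * 2 ^ G + c = a₀ + 1 := by
    have : 0 < 2 * 2 ^ G := by positivity
    omega
  set N₂ : ℤ := n₀ + ((2 * 2 ^ G + c : ℕ) : ℤ) with hN₂
  set N₃ : ℤ := n₀ + ((3 * 2 ^ G + c : ℕ) : ℤ) with hN₃
  have hN₃2 : N₃ = N₂ + ((2 ^ G : ℕ) : ℤ) := by
    rw [hN₂, hN₃]
    push_cast
    ring
  have hdiff : psi x N₃ = psi x N₂ + 1 := by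
    have hle : N₂ ≤ N₂ + ((2 ^ G : ℕ) : ℤ) := by
      have h0 : (0 : ℤ) ≤ ((2 ^ G : ℕ) : ℤ) := by positivity
      omega
    have hD := psi_diff x hle
    rw [show N₂ + ((2 ^ G : ℕ) : ℤ) - N₂ = ((2 ^ G : ℕ) : ℤ) from by ring] at hD
    have hcast0 : (((2 ^ G : ℕ) : ℤ) : ZMod 2) = 0 := by
      push_cast
      rw [show (2 : ZMod 2) = 0 from by decide]
      exact zero_pow (by omega)
    rw [hcast0] at hD
    rw [sum_Ico_int (fun k => ind x k) N₂ (2 ^ G)] at hD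
    have hterm : ∀ j ∈ Finset.range (2 ^ G), ind x (N₂ + (j : ℤ))
        = (if OccU (a₀ + j) then (1 : ZMod 2) else 0) := by
      intro j hj
      simp only [Finset.mem_range] at hj
      have hidx : N₂ + (j : ℤ) - 1 = n₀ + ((a₀ + j : ℕ) : ℤ) := by
        rw [hN₂, hν]
        push_cast
        ring
      have hiff : Occ x (N₂ + (j : ℤ) - 1) ↔ OccU (a₀ + j) := by
        rw [hidx]
        exact hocc_eq (a₀ + j) (by omega)
      unfold ind
      rw [if_congr hiff rfl rfl]
    rw [Finset.sum_congr rfl hterm] at hD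
    rw [hG8] at hD
    rw [occ_sum_count a₀ (2 ^ m₀)] at hD
    have hd8 : (a₀ + 7) / 8 = 2 * 2 ^ m₀ + (c + 6) / 8 := by omega
    rw [hd8] at hD
    have hdle : (c + 6) / 8 ≤ 2 ^ m₀ := by omega
    rw [cz_shift m₀ ((c + 6) / 8) hdle, cz_A m₀] at hD
    have hGb : ((8 * 2 ^ m₀ : ℕ) : ℤ) = ((2 ^ G : ℕ) : ℤ) := by rw [hG8]
    rw [hGb, ← hN₃2] at hD
    rw [hD]
    ring
  rcases z2_cases (psi x N₂) with h0 | h1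
  · exact ⟨N₂, h0, hagree 2 (by norm_num) (by norm_num) uf2⟩
  · refine ⟨N₃, ?_, hagree 3 (by norm_num) (by norm_num) uf3⟩
    rw [hdiff, h1]
    decide

/-- the jump function p is continuous, S = σ^{p(·)} is a homeomorphism of X_θ,
every S-orbit is dense in X_θ, and the speedup has orbit number 2. -/
theorem statement1 :
    ContinuousOn jump (substShift theta) ∧
    RestrictsToHomeomorph Sspeed (substShift theta) ∧
    MinimalOn Sspeed (substShift theta) ∧
    OrbitNumberOn shiftMap Sspeed (substShift theta) 2 := by
  refine ⟨continuousOn_jump, ?_, ?_, ?_⟩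
  · -- restricts to homeomorphism
    refine ⟨Homeomorph.mk ⟨fun p => ⟨Sspeed p, Sspeed_mem p.2⟩,
        fun p => ⟨Sinv p, Sinv_mem p.2⟩,
        fun p => Subtype.ext (Sinv_Sspeed p.2),
        fun p => Subtype.ext (Sspeed_Sinv p.2)⟩ ?_ ?_, fun p => rfl⟩
    · exact Continuous.subtype_mk
        (continuousOn_iff_continuous_restrict.mp continuousOn_Sspeed) _
    · exact Continuous.subtype_mk
        (continuousOn_iff_continuous_restrict.mp continuousOn_Sinv) _
  · -- minimality
    intro x hx y hy
    rw [mem_closure_iff]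
    intro o ho hyo
    obtain ⟨I, u, hu, hsub⟩ := isOpen_pi_iff.mp ho y hyo
    set M := I.sup (fun i => i.natAbs) with hM
    obtain ⟨n, hψ, hag⟩ := key_occurrence hx hy M
    refine ⟨shiftZ n x, hsub ?_, (orbit_char hx _).mpr ⟨n, hψ, rfl⟩⟩
    intro i hi
    have hi' : i ∈ I := hi
    have hiM : i.natAbs ≤ M := Finset.le_sup hi'
    rw [hag i (by omega) (by omega)]
    exact (hu i hi').2
  · -- orbit number 2
    intro x hx
    obtain ⟨m, hm0, hm2, hmψ⟩ := psi_both_near x 0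
    rw [psi_zero] at hmψ
    have hmψ1 : psi x m = 1 := by rw [hmψ]; ring
    refine ⟨![x, shiftZ m x], ?_, ?_, ?_⟩
    · intro i
      fin_cases i
      · exact ⟨hx, 0, Or.inl rfl⟩
      · refine ⟨mem_shift hx m, m.toNat, Or.inl ?_⟩
        rw [shiftMap_iterate, Int.toNat_of_nonneg hm0]
        rfl
    · intro i j hij
      fin_cases i <;> fin_cases j <;> simp at hij ⊢
      · -- shiftZ m x ∉ orbit of x
        intro hmem
        obtain ⟨n, hn0, hneq⟩ := (orbit_char hx _).mp hmem
        have hnm := shift_inj_pt hx hneq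
        rw [hnm, hmψ1] at hn0
        exact absurd hn0 (by decide)
      · -- x ∉ orbit of shiftZ m x
        intro hmem
        obtain ⟨n, hn0, hneq⟩ := (orbit_char (mem_shift hx m) _).mp hmem
        rw [shiftZ_shiftZ] at hneq
        have hneq' : shiftZ (n + m) x = shiftZ 0 x := by
          rw [shiftZ_zero]
          exact hneq
        have hnm : n + m = 0 := shift_inj_pt hx hneq' 
        rw [psi_base, show m + n = 0 from by omega, psi_zero, hmψ1] at hn0
        exact absurd hn0 (by decide)
    · intro y hy
      obtain ⟨hyX, k, hk | hk⟩ := hy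
      · rw [shiftMap_iterate] at hk
        rcases z2_cases (psi x (k : ℤ)) with h0 | h1
        · exact ⟨0, (orbit_char hx _).mpr ⟨k, h0, hk⟩⟩
        · refine ⟨1, (orbit_char (mem_shift hx m) _).mpr ⟨(k : ℤ) - m, ?_, ?_⟩⟩
          · rw [psi_base, show m + ((k : ℤ) - m) = (k : ℤ) from by ring, h1, hmψ1]
            decide
          · rw [shiftZ_shiftZ, show (k : ℤ) - m + m = (k : ℤ) from by ring, hk]
      · rw [shiftMap_iterate] at hk
        have hyform : shiftZ (-(k : ℤ)) x = y := by
          rw [← hk, shiftZ_shiftZ, neg_add_cancel, shiftZ_zero]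
        rcases z2_cases (psi x (-(k : ℤ))) with h0 | h1
        · exact ⟨0, (orbit_char hx _).mpr ⟨-(k : ℤ), h0, hyform⟩⟩
        · refine ⟨1, (orbit_char (mem_shift hx m) _).mpr ⟨-(k : ℤ) - m, ?_, ?_⟩⟩
          · rw [psi_base, show m + (-(k : ℤ) - m) = -(k : ℤ) from by ring, h1, hmψ1]
            decide
          · rw [shiftZ_shiftZ, show -(k : ℤ) - m + m = -(k : ℤ) from by ring, hyform]

end
end

section
/- Let θ be the substitution on {a,b} with θ(a) = ab and θ(b) = aa, let X_θ be its substitution subshift, let A = {x ∈ X_θ : (x_0,…,x_7) = (a,b,a,a,a,b,a,b)}, define p : X_θ → {1,2,3} by p(x) = 3 if x ∈ A, p(x) = 1 if x ∈ σ(A), and p(x) = 2 otherwise, and let S(x) = σ^{p(x)}(x). Then (X_θ, S) is not a Toeplitz flow: it is not topologically conjugate to (Z, σ) for any finite alphabet D and any closure Z of the σ-orbit of a Toeplitz sequence z ∈ D^ℤ. -/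
open Set Topology Classical

noncomputable section

/-! ### Auxiliary development for statement4 -/

namespace S4

abbrev F2 := Fin 2

lemma f2cases (v : F2) : v = 0 ∨ v = 1 := by revert v; decide

def snd2 : F2 → F2 := fun c => if c = 0 then 1 else 0

lemma snd2_inj : Function.Injective snd2 := by decide

/-- safe indexing into a word -/
def wfn (l : List F2) (m : ℕ) : F2 := l.getD m 0

def tw (v : List F2) : List F2 := v.flatMap theta

@[simp] lemma shiftZ_apply {A : Type} (n : ℤ) (x : ℤ → A) (m : ℤ) : shiftZ n x m = x (m + n) := rfl

lemma shiftMap_eq_shiftZ_one {A : Type} (x : ℤ → A) : shiftMap x = shiftZ 1 x := rfl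

lemma shiftZ_shiftZ {A : Type} (a b : ℤ) (x : ℤ → A) : shiftZ a (shiftZ b x) = shiftZ (a + b) x := by
  funext m; simp [shiftZ, add_assoc]

@[simp] lemma shiftZ_zero {A : Type} (x : ℤ → A) : shiftZ 0 x = x := by funext m; simp [shiftZ]

lemma shiftMap_iter {A : Type} (m : ℕ) (x : ℤ → A) : shiftMap^[m] x = shiftZ (m : ℤ) x := by
  induction m with
  | zero => simp
  | succ k ih =>
      rw [Function.iterate_succ_apply', ih, shiftMap_eq_shiftZ_one, shiftZ_shiftZ]
      norm_num [add_comm]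

lemma seqWord_shiftZ {A : Type} (t : ℤ) (x : ℤ → A) (i : ℤ) (n : ℕ) :
    seqWord (shiftZ t x) i n = seqWord x (i + t) n := by
  unfold seqWord
  congr 1; funext m; simp [shiftZ]; ring_nf

lemma substShift_shiftZ {x : ℤ → F2} (hx : x ∈ substShift theta) (t : ℤ) :
    shiftZ t x ∈ substShift theta := by
  intro i n
  rw [seqWord_shiftZ]
  exact hx (i + t) n

/-! ### word structure lemmas -/

lemma substPow_length (k : ℕ) (a : F2) : (substPow theta k a).length = 2 ^ k := by
  induction k generalizing a with
  | zero => rfl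
  | succ k ih =>
      show ((theta a).flatMap (substPow theta k)).length = 2 ^ (k + 1)
      rcases f2cases a with h | h <;> subst h <;>
        simp [theta, List.flatMap_cons, ih, pow_succ] <;> ring

lemma substPow_succ_tw (k : ℕ) (a : F2) :
    substPow theta (k + 1) a = tw (substPow theta k a) := by
  induction k generalizing a with
  | zero =>
      show (theta a).flatMap (substPow theta 0) = tw [a]
      simp only [tw, List.flatMap_singleton]
      show (theta a).flatMap (fun b => [b]) = theta a
      exact List.flatMap_singleton' _
  | succ k ih =>
      show (theta a).flatMap (substPow theta (k + 1)) = tw ((theta a).flatMap (substPow theta k))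
      rw [tw, List.flatMap_assoc]
      congr 1
      funext b
      rw [ih b, tw]

lemma tw_length (v : List F2) : (tw v).length = 2 * v.length := by
  induction v with
  | nil => rfl
  | cons a v ih =>
      rcases f2cases a with h | h <;> subst h <;> simp [tw, theta, List.flatMap_cons] at ih ⊢ <;> omega

lemma wfn_tw_even (v : List F2) (m : ℕ) : wfn (tw v) (2 * m) = 0 := by
  induction v generalizing m with
  | nil => simp [wfn, tw]
  | cons a v ih =>
      have h2 : tw (a :: v) = theta a ++ tw v := by simp [tw, List.flatMap_cons]
      rcases Nat.eq_zero_or_pos m with hm | hm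
      · subst hm
        rcases f2cases a with h | h <;> subst h <;> simp [h2, wfn, theta]
      · have hlen : (theta a).length = 2 := by rcases f2cases a with h | h <;> subst h <;> rfl
        have : 2 * m = (theta a).length + 2 * (m - 1) := by omega
        rw [h2, wfn, this, List.getD_append_right _ _ _ _ (by omega)]
        have : (theta a).length + 2 * (m - 1) - (theta a).length = 2 * (m - 1) := by omega
        rw [this]
        exact ih (m - 1)

lemma wfn_tw_odd (v : List F2) (m : ℕ) (hm : m < v.length) :
    wfn (tw v) (2 * m + 1) = snd2 (wfn v m) := by
  induction v generalizing m with
  | nil => simp at hm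
  | cons a v ih =>
      have h2 : tw (a :: v) = theta a ++ tw v := by simp [tw, List.flatMap_cons]
      have hlen : (theta a).length = 2 := by rcases f2cases a with h | h <;> subst h <;> rfl
      rcases Nat.eq_zero_or_pos m with hm0 | hm0
      · subst hm0
        rcases f2cases a with h | h <;> subst h <;> simp [h2, wfn, theta, snd2]
      · have hm' : m - 1 < v.length := by
          rw [List.length_cons] at hm; omega
        have he : 2 * m + 1 = (theta a).length + (2 * (m - 1) + 1) := by omega
        have h4 : wfn (tw (a :: v)) (2 * m + 1) = wfn (tw v) (2 * (m - 1) + 1) := by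
          rw [h2]
          show (theta a ++ tw v).getD (2 * m + 1) 0 = wfn (tw v) (2 * (m - 1) + 1)
          rw [he, List.getD_append_right _ _ _ _ (by omega)]
          have h3 : (theta a).length + (2 * (m - 1) + 1) - (theta a).length = 2 * (m - 1) + 1 := by omega
          rw [h3]; rfl
        rw [h4, ih (m - 1) hm']
        congr 1
        obtain ⟨u, hu⟩ : ∃ u, m = u + 1 := ⟨m - 1, by omega⟩
        subst hu
        show wfn v u = wfn (a :: v) (u + 1)
        simp [wfn, List.getD_cons_succ]

end S4

namespace S4

lemma wfn_seqWord (x : ℤ → F2) (i : ℤ) (n : ℕ) (m : ℕ) (hm : m < n) :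
    (seqWord x i n).getD m 0 = x (i + m) := by
  unfold seqWord
  rw [List.getD_eq_getElem _ _ (by simpa using hm), List.getElem_ofFn]

/-- Every window of a point of the subshift sits inside some `θ^k(a)`. -/
lemma bridge {x : ℤ → F2} (hx : x ∈ substShift theta) (i : ℤ) (n : ℕ) :
    ∃ (k : ℕ) (a : F2) (q : ℕ), q + n ≤ 2 ^ k ∧
      ∀ m : ℕ, m < n → x (i + m) = wfn (substPow theta k a) (q + m) := by
  obtain ⟨k, a, hinf⟩ := hx i n
  obtain ⟨s, t, hst⟩ := hinf
  refine ⟨k, a, s.length, ?_, ?_⟩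
  · have := congrArg List.length hst
    simp [substPow_length] at this
    unfold seqWord at this
    simp at this
    omega
  · intro m hm
    have h1 : wfn (substPow theta k a) (s.length + m) = (seqWord x i n).getD m 0 := by
      rw [← hst, wfn]
      rw [List.append_assoc, List.getD_append_right _ _ _ _ (le_add_of_nonneg_right (by omega))]
      simp only [Nat.add_sub_cancel_left]
      rw [List.getD_append _ _ _ _ (by unfold seqWord; simpa using hm)]
    rw [h1, wfn_seqWord _ _ _ _ hm]

/-- two `b`s cannot be at odd distance -/
lemma no_b_odd {x : ℤ → F2} (hx : x ∈ substShift theta) (i : ℤ) (d : ℕ) (hd : d % 2 = 1)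
    (h1 : x i = 1) (h2 : x (i + d) = 1) : False := by
  obtain ⟨k, a, q, hq, hval⟩ := bridge hx i (d + 1)
  have hk : k ≠ 0 := by
    intro h; subst h; simp at hq; omega
  obtain ⟨k', rfl⟩ : ∃ k', k = k' + 1 := ⟨k - 1, by omega⟩
  rw [substPow_succ_tw] at hval
  have hv0 := hval 0 (by omega)
  have hvd := hval d (by omega)
  rcases Nat.even_or_odd q with hpar | hpar
  · obtain ⟨u, hu⟩ := hpar
    rw [(by omega : q + 0 = 2 * u), wfn_tw_even] at hv0
    simp at hv0
    exact absurd hv0 (by rw [h1]; decide)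
  · obtain ⟨u, hu⟩ := hpar
    rw [(by omega : q + d = 2 * (u + (d+1)/2)), wfn_tw_even] at hvd
    exact absurd hvd (by rw [h2]; decide)

lemma b_parity {x : ℤ → F2} (hx : x ∈ substShift theta) {i j : ℤ}
    (h1 : x i = 1) (h2 : x j = 1) : (i - j) % 2 = 0 := by
  rcases le_total j i with h | h
  · by_contra hodd
    have hd : ((i - j).toNat) % 2 = 1 := by omega
    exact no_b_odd hx j _ hd h2 (by rw [(by omega : j + ((i - j).toNat : ℤ) = i)]; exact h1)
  · by_contra hodd
    have hd : ((j - i).toNat) % 2 = 1 := by omega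
    exact no_b_odd hx i _ hd h1 (by rw [(by omega : i + ((j - i).toNat : ℤ) = j)]; exact h2)

/-- no `aaaa` -/
lemma no_aaaa {x : ℤ → F2} (hx : x ∈ substShift theta) (i : ℤ)
    (h : ∀ s : ℕ, s < 4 → x (i + s) = 0) : False := by
  obtain ⟨k, a, q, hq, hval⟩ := bridge hx i 4
  have hk : 2 ≤ k := by
    rcases Nat.lt_or_ge k 2 with h' | h'
    · interval_cases k <;> simp at hq <;> omega
    · exact h'
  obtain ⟨k', rfl⟩ : ∃ k', k = k' + 2 := ⟨k - 2, by omega⟩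
  rw [substPow_succ_tw, substPow_succ_tw] at hval
  set v := substPow theta k' a with hv
  have hlenv : (tw v).length = 2 ^ (k' + 1) := by
    rw [tw_length, substPow_length]; ring
  -- choose the odd position q' among q, q+1
  obtain ⟨m, m0, hsm⟩ : ∃ m s0, (s0 < 2) ∧ q + s0 = 2 * m + 1 ∧ s0 + 2 < 4 := by
    rcases Nat.even_or_odd q with ⟨u, hu⟩ | ⟨u, hu⟩
    · exact ⟨u, 1, by omega, by omega, by omega⟩
    · exact ⟨u, 0, by omega, by omega, by omega⟩
  obtain ⟨hs0lt, hqs, hs2⟩ := hsm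
  have hlen2 : (2:ℕ) ^ (k' + 2) = 2 * (tw v).length := by
    rw [hlenv]; ring
  have hb1 : m + 1 < (tw v).length := by omega
  have e1 := hval m0 (by omega)
  have e2 := hval (m0 + 2) (by omega)
  rw [(by omega : q + m0 = 2 * m + 1), wfn_tw_odd _ _ (by omega)] at e1
  rw [(by omega : q + (m0 + 2) = 2 * (m + 1) + 1), wfn_tw_odd _ _ hb1] at e2
  have hz1 : x (i + (m0 : ℕ)) = 0 := h m0 (by omega)
  have hz2 : x (i + ((m0 + 2 : ℕ) : ℕ)) = 0 := h (m0 + 2) (by omega)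
  have w1 : wfn (tw v) m = 1 := by
    rcases f2cases (wfn (tw v) m) with hc | hc
    · rw [hc, hz1] at e1; exact absurd e1 (by decide)
    · exact hc
  have w2 : wfn (tw v) (m + 1) = 1 := by
    rcases f2cases (wfn (tw v) (m + 1)) with hc | hc
    · rw [hc, hz2] at e2; exact absurd e2 (by decide)
    · exact hc
  rcases Nat.even_or_odd m with ⟨u, hu⟩ | ⟨u, hu⟩
  · rw [(by omega : m = 2 * u), wfn_tw_even] at w1; exact absurd w1 (by decide)
  · rw [(by omega : m + 1 = 2 * (u + 1)), wfn_tw_even] at w2; exact absurd w2 (by decide)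

end S4

namespace S4

lemma b_exists {x : ℤ → F2} (hx : x ∈ substShift theta) (i : ℤ) :
    ∃ s : ℕ, s < 4 ∧ x (i + s) = 1 := by
  by_contra hno
  push_neg at hno
  exact no_aaaa hx i (fun s hs => by
    rcases f2cases (x (i + s)) with h | h
    · exact h
    · exact absurd h (hno s hs))

lemma snd2_eq_zero {c : F2} (h : snd2 c = 0) : c = 1 := by
  rcases f2cases c with h' | h'
  · rw [h'] at h; exact absurd h (by decide)
  · exact h'

/-- Desubstitution: one level down. -/
lemma desub {x : ℤ → F2} (hx : x ∈ substShift theta) :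
    ∃ (δ : ℤ) (c : ℤ → F2), (δ = 0 ∨ δ = 1) ∧ c ∈ substShift theta ∧
      (∀ j : ℤ, x (δ + 2 * j) = 0) ∧ (∀ j : ℤ, x (δ + 2 * j + 1) = snd2 (c j)) := by
  obtain ⟨s, hs4, hbs⟩ := b_exists hx 0
  rw [zero_add] at hbs
  obtain ⟨δ, hδ01, hδpar⟩ : ∃ δ : ℤ, (δ = 0 ∨ δ = 1) ∧ (δ - s) % 2 = 1 := by
    rcases Int.emod_two_eq_zero_or_one (s : ℤ) with h | h
    · exact ⟨1, Or.inr rfl, by omega⟩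
    · exact ⟨0, Or.inl rfl, by omega⟩
  have heven0 : ∀ j : ℤ, x (δ + 2 * j) = 0 := by
    intro j
    rcases f2cases (x (δ + 2 * j)) with h | h
    · exact h
    · have := b_parity hx h hbs
      omega
  set c : ℤ → F2 := fun j => if x (δ + 2 * j + 1) = 1 then 0 else 1 with hc
  have hodd : ∀ j : ℤ, x (δ + 2 * j + 1) = snd2 (c j) := by
    intro j
    rcases f2cases (x (δ + 2 * j + 1)) with h | h <;> simp [hc, h, snd2]
  refine ⟨δ, c, hδ01, ?_, heven0, hodd⟩
  -- c is in the subshift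
  intro i n
  rcases Nat.eq_zero_or_pos n with hn0 | hn0
  · subst hn0
    exact ⟨0, 0, by simp [seqWord]⟩
  obtain ⟨k, a, q, hq, hval⟩ := bridge hx (δ + 2 * i) (2 * n)
  have hk : k ≠ 0 := by intro h; subst h; simp at hq; omega
  obtain ⟨k', rfl⟩ : ∃ k', k = k' + 1 := ⟨k - 1, by omega⟩
  rw [substPow_succ_tw] at hval
  set v := substPow theta k' a with hv
  have hlenv : (tw v).length = 2 ^ (k' + 1) := by rw [tw_length, substPow_length]; ring
  have hvlen : v.length = 2 ^ k' := substPow_length k' a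
  rcases Nat.even_or_odd q with ⟨q', hq'⟩ | ⟨q', hq'⟩
  · -- aligned case : the c-window is an infix of v = θ^k'(a)
    have hkey : ∀ m : ℕ, m < n → c (i + m) = wfn v (q' + m) := by
      intro m hm
      have h1 := hval (2 * m + 1) (by omega)
      have h2 : (δ + 2 * i) + ((2 * m + 1 : ℕ) : ℤ) = δ + 2 * (i + m) + 1 := by push_cast; ring
      rw [h2] at h1
      rw [hodd (i + m)] at h1
      rw [(by omega : q + (2 * m + 1) = 2 * (q' + m) + 1), wfn_tw_odd _ _ (by omega)] at h1
      exact snd2_inj h1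
    refine ⟨k', a, ?_⟩
    have hlen : q' + n ≤ v.length := by omega
    have heq : seqWord c i n = (v.drop q').take n := by
      apply List.ext_getElem
      · simp [seqWord, hvlen]; omega
      · intro m hm1 hm2
        have hm : m < n := by simpa [seqWord] using hm1
        rw [List.getElem_take, List.getElem_drop]
        have hk2 := hkey m hm
        simp only [seqWord, List.getElem_ofFn]
        rw [hk2, wfn, List.getD_eq_getElem _ _ (by omega)]
    rw [heq]
    exact ((v.drop q').take_prefix n).isInfix.trans (v.drop_suffix q').isInfix
  · -- misaligned case: the c-window is all b's, so n must be 1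
    have hallb : ∀ u : ℕ, u < n → c (i + u) = 1 := by
      intro u hu
      have h1 := hval (2 * u + 1) (by omega)
      have h2 : (δ + 2 * i) + ((2 * u + 1 : ℕ) : ℤ) = δ + 2 * (i + u) + 1 := by push_cast; ring
      rw [h2, hodd (i + u)] at h1
      rw [(by omega : q + (2 * u + 1) = 2 * (q' + u + 1)), wfn_tw_even] at h1
      exact snd2_eq_zero h1
    rcases Nat.lt_or_ge n 2 with hn2 | hn2
    · have hn1 : n = 1 := by omega
      subst hn1
      refine ⟨1, 0, ?_⟩
      have h0 := hallb 0 (by omega)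
      push_cast at h0
      rw [add_zero] at h0
      have hseq : seqWord c i 1 = [c i] := by
        simp [seqWord, List.ofFn_succ]
      rw [hseq, h0]
      decide
    · exfalso
      apply no_aaaa hx (δ + 2 * i + 1)
      intro t ht
      interval_cases t
      · have h0 := hallb 0 (by omega)
        push_cast at h0; rw [add_zero] at h0
        have := hodd i
        rw [h0] at this
        push_cast
        rw [add_zero]
        rw [this]; decide
      · have := heven0 (i + 1)
        rw [(by push_cast; ring : (δ + 2 * i + 1) + ((1:ℕ):ℤ) = δ + 2 * (i + 1))]
        exact this
      · have h1 := hallb 1 (by omega)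
        push_cast at h1
        have := hodd (i + 1)
        rw [h1] at this
        rw [(by push_cast; ring : (δ + 2 * i + 1) + ((2:ℕ):ℤ) = δ + 2 * (i + 1) + 1)]
        rw [this]; decide
      · have := heven0 (i + 2)
        rw [(by push_cast; ring : (δ + 2 * i + 1) + ((3:ℕ):ℤ) = δ + 2 * (i + 2))]
        exact this

end S4

namespace S4

/-- Iterated desubstitution: level-ρ block structure. -/
lemma tower {x : ℤ → F2} (hx : x ∈ substShift theta) (ρ : ℕ) :
    ∃ (g : ℤ) (c : ℤ → F2), 0 ≤ g ∧ g < 2 ^ ρ ∧ c ∈ substShift theta ∧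
      ∀ (j : ℤ) (r : ℕ), r < 2 ^ ρ → x (g + 2 ^ ρ * j + r) = wfn (substPow theta ρ (c j)) r := by
  induction ρ generalizing x with
  | zero =>
      refine ⟨0, x, le_refl _, by norm_num, hx, ?_⟩
      intro j r hr
      interval_cases r
      simp [wfn, substPow]
  | succ ρ ih =>
      obtain ⟨δ, c1, hδ01, hc1, hev, hod⟩ := desub hx
      obtain ⟨g1, c, hg0, hg1, hcX, HB⟩ := ih hc1
      refine ⟨δ + 2 * g1, c, by omega, by push_cast [pow_succ]; omega, hcX, ?_⟩
      intro j r hr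
      obtain ⟨r', r0, hr0, hreq, hr'⟩ : ∃ r' r0 : ℕ, r0 < 2 ∧ r = 2 * r' + r0 ∧ r' < 2 ^ ρ := by
        refine ⟨r / 2, r % 2, by omega, by omega, by
          have : (2:ℕ) ^ (ρ + 1) = 2 * 2 ^ ρ := by ring
          omega⟩
      have hpos : δ + 2 * g1 + 2 ^ (ρ + 1) * j + (r : ℤ) =
          δ + 2 * (g1 + 2 ^ ρ * j + (r' : ℤ)) + (r0 : ℤ) := by
        subst hreq; push_cast [pow_succ]; ring
      rw [hpos, substPow_succ_tw]
      rcases (by omega : r0 = 0 ∨ r0 = 1) with h0 | h0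
      · subst h0
        rw [(by push_cast; ring : δ + 2 * (g1 + 2 ^ ρ * j + (r' : ℤ)) + ((0:ℕ) : ℤ) =
              δ + 2 * (g1 + 2 ^ ρ * j + (r' : ℤ)))]
        rw [hev (g1 + 2 ^ ρ * j + (r' : ℤ))]
        rw [(by omega : r = 2 * r'), wfn_tw_even]
      · subst h0
        rw [(by push_cast; ring : δ + 2 * (g1 + 2 ^ ρ * j + (r' : ℤ)) + ((1:ℕ) : ℤ) =
              δ + 2 * (g1 + 2 ^ ρ * j + (r' : ℤ)) + 1)]
        rw [hod (g1 + 2 ^ ρ * j + (r' : ℤ))]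
        rw [HB j r' hr']
        rw [(by omega : r = 2 * r' + 1), wfn_tw_odd _ _ (by rw [substPow_length]; omega)]

/-! ### counting -/

/-- number of `a`s in the window `[s, s+n)` -/
def cnt0 (y : ℤ → F2) (s : ℤ) (n : ℕ) : ℕ :=
  ∑ m ∈ Finset.range n, (if y (s + m) = 0 then 1 else 0)

def cnt1 (y : ℤ → F2) (s : ℤ) (n : ℕ) : ℕ :=
  ∑ m ∈ Finset.range n, (if y (s + m) = 1 then 1 else 0)

lemma cnt0_add_cnt1 (y : ℤ → F2) (s : ℤ) (n : ℕ) : cnt0 y s n + cnt1 y s n = n := by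
  unfold cnt0 cnt1
  rw [← Finset.sum_add_distrib]
  have : ∀ m ∈ Finset.range n,
      ((if y (s + m) = 0 then 1 else 0) + if y (s + m) = 1 then 1 else 0) = 1 := by
    intro m _
    rcases f2cases (y (s + m)) with h | h <;> rw [h] <;> decide
  rw [Finset.sum_congr rfl this]
  simp

lemma cnt0_succ (y : ℤ → F2) (s : ℤ) (n : ℕ) :
    cnt0 y s (n + 1) = cnt0 y s n + (if y (s + n) = 0 then 1 else 0) :=
  Finset.sum_range_succ _ n

lemma cnt1_succ (y : ℤ → F2) (s : ℤ) (n : ℕ) :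
    cnt1 y s (n + 1) = cnt1 y s n + (if y (s + n) = 1 then 1 else 0) :=
  Finset.sum_range_succ _ n

lemma cnt0_split (y : ℤ → F2) (s : ℤ) (n m : ℕ) :
    cnt0 y s (n + m) = cnt0 y s n + cnt0 y (s + n) m := by
  induction m with
  | zero => simp [cnt0]
  | succ m ih =>
      rw [(by ring : n + (m + 1) = (n + m) + 1), cnt0_succ, ih, cnt0_succ]
      rw [(by push_cast; ring : s + ((n + m : ℕ) : ℤ) = s + (n : ℕ) + (m : ℕ))]
      ring

lemma cnt1_split (y : ℤ → F2) (s : ℤ) (n m : ℕ) :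
    cnt1 y s (n + m) = cnt1 y s n + cnt1 y (s + n) m := by
  induction m with
  | zero => simp [cnt1]
  | succ m ih =>
      rw [(by ring : n + (m + 1) = (n + m) + 1), cnt1_succ, ih, cnt1_succ]
      rw [(by push_cast; ring : s + ((n + m : ℕ) : ℤ) = s + (n : ℕ) + (m : ℕ))]
      ring

end S4

namespace S4

lemma cnt_pair {y : ℤ → F2} {δ : ℤ} {c : ℤ → F2}
    (hev : ∀ j : ℤ, y (δ + 2 * j) = 0) (hod : ∀ j : ℤ, y (δ + 2 * j + 1) = snd2 (c j))
    (s : ℤ) : cnt1 y s 2 = (if c ((s - δ) / 2) = 0 then 1 else 0) := by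
  have hc2 : cnt1 y s 2 = (if y (s + ((0:ℕ):ℤ)) = 1 then 1 else 0) + (if y (s + ((1:ℕ):ℤ)) = 1 then 1 else 0) := by
    unfold cnt1
    rw [Finset.sum_range_succ, Finset.sum_range_succ, Finset.sum_range_zero, zero_add]
  rcases Int.even_or_odd (s - δ) with ⟨i, hi⟩ | ⟨i, hi⟩
  · have hq : (s - δ) / 2 = i := by omega
    have hs0 : s + ((0:ℕ):ℤ) = δ + 2 * i := by push_cast; omega
    have hs1 : s + ((1:ℕ):ℤ) = δ + 2 * i + 1 := by push_cast; omega
    rw [hc2, hq, hs0, hs1, hev i, hod i]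
    rcases f2cases (c i) with h | h <;> rw [h] <;> simp [snd2]
  · have hq : (s - δ) / 2 = i := by omega
    have hs0 : s + ((0:ℕ):ℤ) = δ + 2 * i + 1 := by push_cast; omega
    have hs1 : s + ((1:ℕ):ℤ) = δ + 2 * (i + 1) := by push_cast; omega
    rw [hc2, hq, hs0, hs1, hev (i + 1), hod i]
    rcases f2cases (c i) with h | h <;> rw [h] <;> simp [snd2]

lemma cnt_transfer {y : ℤ → F2} {δ : ℤ} {c : ℤ → F2}
    (hev : ∀ j : ℤ, y (δ + 2 * j) = 0) (hod : ∀ j : ℤ, y (δ + 2 * j + 1) = snd2 (c j))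
    (L : ℕ) (s : ℤ) : cnt1 y s (2 * L) = cnt0 c ((s - δ) / 2) L := by
  induction L with
  | zero => simp [cnt1, cnt0]
  | succ L ih =>
      rw [(by ring : 2 * (L + 1) = 2 * L + 2), cnt1_split, ih, cnt_pair hev hod, cnt0_succ]
      have harg : (s + ((2 * L : ℕ) : ℤ) - δ) / 2 = (s - δ) / 2 + L := by push_cast; omega
      rw [harg]

lemma hits0 {y : ℤ → F2} (hy : y ∈ substShift theta) (A : ℤ) (Δ : ℕ) (hΔ : Δ % 2 = 1) :
    ∃ k : ℕ, y (A + (k : ℤ) * Δ) = 0 := by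
  obtain ⟨δ, c, hδ01, hcX, hev, hod⟩ := desub hy
  rcases Int.even_or_odd (A - δ) with ⟨i, hi⟩ | ⟨i, hi⟩
  · refine ⟨0, ?_⟩
    rw [(by push_cast; omega : A + ((0:ℕ):ℤ) * (Δ:ℤ) = δ + 2 * i)]
    exact hev i
  · refine ⟨1, ?_⟩
    have hodd2 : (A + Δ - δ) % 2 = 0 := by omega
    obtain ⟨i', hi'⟩ : ∃ i', A + Δ = δ + 2 * i' := ⟨(A + Δ - δ) / 2, by omega⟩
    rw [(by push_cast; omega : A + ((1:ℕ):ℤ) * (Δ:ℤ) = δ + 2 * i')]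
    exact hev i'

lemma hits1 {y : ℤ → F2} (hy : y ∈ substShift theta) (A : ℤ) (Δ : ℕ) (hΔ : Δ % 2 = 1) :
    ∃ k : ℕ, y (A + (k : ℤ) * Δ) = 1 := by
  by_contra hno
  push_neg at hno
  have hall : ∀ k : ℕ, y (A + (k : ℤ) * Δ) = 0 :=
    fun k => (f2cases _).resolve_right (hno k)
  obtain ⟨δ, c, hδ01, hcX, hev, hod⟩ := desub hy
  obtain ⟨k1, hk1⟩ : ∃ k1 : ℕ, (A + (k1 : ℤ) * Δ - δ) % 2 = 1 := by
    rcases Int.even_or_odd (A - δ) with ⟨i, hi⟩ | ⟨i, hi⟩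
    · exact ⟨1, by push_cast; omega⟩
    · exact ⟨0, by push_cast; omega⟩
  set i1 : ℤ := (A + (k1 : ℤ) * Δ - δ - 1) / 2 with hi1
  have hbase : A + (k1 : ℤ) * Δ = δ + 2 * i1 + 1 := by
    rw [hi1]
    set P : ℤ := (k1 : ℤ) * Δ
    omega
  have hcb : ∀ k' : ℕ, c (i1 + (k' : ℤ) * Δ) = 1 := by
    intro k'
    have hpos : A + ((k1 + 2 * k' : ℕ) : ℤ) * Δ = δ + 2 * (i1 + (k' : ℤ) * Δ) + 1 := by
      push_cast
      linear_combination hbase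
    have h := hall (k1 + 2 * k')
    rw [hpos, hod] at h
    exact snd2_eq_zero h
  obtain ⟨k', hk'⟩ := hits0 hcX i1 Δ hΔ
  rw [hcb k'] at hk'
  exact absurd hk' (by decide)

lemma substPow_split (ρ : ℕ) (C : F2) :
    substPow theta (ρ + 1) C = substPow theta ρ 0 ++ substPow theta ρ (snd2 C) := by
  rcases f2cases C with h | h <;> subst h <;>
    show (theta _).flatMap (substPow theta ρ) = _ <;>
    simp [theta, snd2]

lemma substPow_prefix (ρ : ℕ) (r : ℕ) (hr : r + 1 < 2 ^ ρ) (A B : F2) :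
    wfn (substPow theta ρ A) r = wfn (substPow theta ρ B) r := by
  induction ρ generalizing A B r with
  | zero => simp at hr
  | succ ρ ih =>
      have hp : (2:ℕ) ^ (ρ + 1) = 2 * 2 ^ ρ := by ring
      rw [substPow_split, substPow_split]
      rcases Nat.lt_or_ge r (2 ^ ρ) with h | h
      · unfold wfn
        rw [List.getD_append _ _ _ _ (by rw [substPow_length]; omega),
            List.getD_append _ _ _ _ (by rw [substPow_length]; omega)]
      · unfold wfn
        rw [List.getD_append_right _ _ _ _ (by rw [substPow_length]; omega),
            List.getD_append_right _ _ _ _ (by rw [substPow_length]; omega)]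
        rw [substPow_length]
        exact ih (r - 2 ^ ρ) (by omega) _ _

lemma substPow_last_ne (ρ : ℕ) :
    wfn (substPow theta ρ 0) (2 ^ ρ - 1) ≠ wfn (substPow theta ρ 1) (2 ^ ρ - 1) := by
  induction ρ with
  | zero => decide
  | succ ρ ih =>
      have hp : (2:ℕ) ^ (ρ + 1) = 2 * 2 ^ ρ := by ring
      have hpos : (1:ℕ) ≤ 2 ^ ρ := Nat.one_le_two_pow
      rw [substPow_split, substPow_split]
      unfold wfn
      rw [List.getD_append_right _ _ _ _ (by rw [substPow_length]; omega),
          List.getD_append_right _ _ _ _ (by rw [substPow_length]; omega)]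
      rw [substPow_length]
      have hidx : 2 ^ (ρ + 1) - 1 - 2 ^ ρ = 2 ^ ρ - 1 := by omega
      rw [hidx]
      simpa [snd2, wfn] using ih.symm

lemma odd_inv (Δ : ℕ) (hΔ : Δ % 2 = 1) (ρ : ℕ) : ∃ u t : ℤ, u * Δ = 1 + 2 ^ ρ * t := by
  induction ρ with
  | zero => exact ⟨1, (Δ : ℤ) - 1, by push_cast; ring⟩
  | succ ρ ih =>
      obtain ⟨u, t, h⟩ := ih
      rcases Int.even_or_odd t with ⟨t', ht⟩ | ⟨t', ht⟩
      · refine ⟨u, t', ?_⟩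
        rw [h, ht, pow_succ]
        ring
      · refine ⟨u + 2 ^ ρ, (t + Δ) / 2, ?_⟩
        have h3 : (t + (Δ:ℤ)) = 2 * ((t + Δ) / 2) := by omega
        rw [pow_succ]
        linear_combination h + 2 ^ ρ * h3

lemma solveAP (Δ : ℕ) (hΔ : Δ % 2 = 1) (ρ : ℕ) (M a : ℤ) :
    ∃ (k0 : ℕ) (i0 : ℤ), M + (k0 : ℤ) * Δ = a + 2 ^ ρ * i0 := by
  obtain ⟨u, t, hu⟩ := odd_inv Δ hΔ ρ
  have hpos : (0:ℤ) < 2 ^ ρ := by positivity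
  set z : ℤ := u * (a - M) with hz
  set w : ℤ := z % 2 ^ ρ with hw
  have hw0 : 0 ≤ w := Int.emod_nonneg _ (by omega)
  refine ⟨w.toNat, t * (a - M) - (z / 2 ^ ρ) * Δ, ?_⟩
  rw [Int.toNat_of_nonneg hw0, hw, Int.emod_def, hz]
  linear_combination (a - M) * hu

end S4

namespace S4

/-- Core combinatorial fact: no point of the subshift has an arithmetic progression of
blocks all of whose `a`-counts are even. -/
lemma no_even_AP : ∀ (Δ : ℕ), 1 ≤ Δ → ∀ (y : ℤ → F2), y ∈ substShift theta → ∀ M : ℤ,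
    ¬ (∀ k : ℕ, Even (cnt0 y (M + (k : ℤ) * Δ) Δ)) := by
  intro Δ
  induction Δ using Nat.strong_induction_on with
  | _ Δ IH =>
    intro hΔ1 y hy M hall
    rcases Nat.even_or_odd Δ with heven | hodd
    · -- even case: descend one level
      obtain ⟨Δ', hΔ'⟩ := heven
      have hΔeq : Δ = 2 * Δ' := by omega
      have hΔ'1 : 1 ≤ Δ' := by omega
      obtain ⟨δ, c, hδ01, hcX, hev, hod⟩ := desub hy
      apply IH Δ' (by omega) hΔ'1 c hcX ((M - δ) / 2)
      intro k
      have h1 := hall k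
      have htot := cnt0_add_cnt1 y (M + (k:ℤ) * Δ) Δ
      have heq : cnt1 y (M + (k:ℤ) * Δ) (2 * Δ') = cnt0 c ((M + (k:ℤ) * Δ - δ) / 2) Δ' :=
        cnt_transfer hev hod Δ' _
      rw [← hΔeq] at heq
      have hcast : (Δ:ℤ) = 2 * (Δ':ℤ) := by push_cast [hΔeq]; ring
      have harg : (M + (k:ℤ) * Δ - δ) / 2 = (M - δ) / 2 + (k:ℤ) * Δ' := by
        set P : ℤ := (k:ℤ) * Δ' with hP
        have h2P : (k:ℤ) * (Δ:ℤ) = 2 * P := by rw [hcast, hP]; ring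
        omega
      rw [harg] at heq
      rw [Nat.even_iff] at h1 ⊢
      omega
    · -- odd case: direct contradiction via block alignment
      have hΔmod : Δ % 2 = 1 := Nat.odd_iff.mp hodd
      have hρ : Δ < 2 ^ Δ := Nat.lt_two_pow_self (n := Δ)
      obtain ⟨g, cρ, hg0, hglt, hcρX, HB⟩ := tower hy Δ
      obtain ⟨k0, i0, hk0⟩ := solveAP Δ hΔmod Δ M (g - 1)
      set β : ℕ := ∑ m ∈ Finset.range (Δ - 1),
        (if wfn (substPow theta Δ 0) m = 0 then 1 else 0) with hβ
      have hone : (1:ℕ) ≤ 2 ^ Δ := Nat.one_le_two_pow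
      have hblock : ∀ i : ℤ, cnt0 y (g - 1 + 2 ^ Δ * i) Δ =
          (if y (g - 1 + 2 ^ Δ * i) = 0 then 1 else 0) + β := by
        intro i
        set s : ℤ := g - 1 + 2 ^ Δ * i with hs
        have hsplit : cnt0 y s Δ = cnt0 y s 1 + cnt0 y (s + ((1:ℕ):ℤ)) (Δ - 1) := by
          rw [← cnt0_split]
          congr 1
          omega
        rw [hsplit]
        congr 1
        · have h1 : cnt0 y s 1 = if y (s + ((0:ℕ):ℤ)) = 0 then 1 else 0 :=
            Finset.sum_range_one _
          rw [h1]
          norm_num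
        · rw [hβ]
          apply Finset.sum_congr rfl
          intro m hm
          have hm' : m < Δ - 1 := Finset.mem_range.mp hm
          have hposm : s + ((1:ℕ):ℤ) + (m:ℤ) = g + 2 ^ Δ * i + (m:ℤ) := by
            rw [hs]; push_cast; ring
          rw [hposm, HB i m (by omega), substPow_prefix Δ m (by omega) _ 0]
      have hmain : ∀ k' : ℕ,
          Even ((if wfn (substPow theta Δ (cρ (i0 - 1 + (k':ℤ) * Δ))) (2 ^ Δ - 1) = 0
            then 1 else 0) + β) := by
        intro k'
        have hk := hall (k0 + 2 ^ Δ * k')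
        have hposkey : M + ((k0 + 2 ^ Δ * k' : ℕ):ℤ) * Δ =
            g - 1 + 2 ^ Δ * (i0 + (k':ℤ) * Δ) := by
          push_cast
          linear_combination hk0
        rw [hposkey, hblock (i0 + (k':ℤ) * Δ)] at hk
        have hplace : g - 1 + 2 ^ Δ * (i0 + (k':ℤ) * Δ) =
            g + 2 ^ Δ * (i0 + (k':ℤ) * Δ - 1) + ((2 ^ Δ - 1 : ℕ) : ℤ) := by
          push_cast [Nat.cast_sub hone]
          ring
        rw [hplace, HB _ _ (by omega)] at hk
        rw [(by ring : i0 + (k':ℤ) * Δ - 1 = i0 - 1 + (k':ℤ) * Δ)] at hk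
        exact hk
      obtain ⟨ka, hka⟩ := hits0 hcρX (i0 - 1) Δ hΔmod
      obtain ⟨kb, hkb⟩ := hits1 hcρX (i0 - 1) Δ hΔmod
      have ha := hmain ka
      have hb := hmain kb
      rw [hka] at ha
      rw [hkb] at hb
      have hne := substPow_last_ne Δ
      rcases f2cases (wfn (substPow theta Δ 0) (2 ^ Δ - 1)) with h0 | h0 <;>
        rcases f2cases (wfn (substPow theta Δ 1) (2 ^ Δ - 1)) with h1 | h1
      · rw [h0, h1] at hne; exact hne rfl
      · rw [h0] at ha; rw [h1] at hb
        rw [if_pos rfl] at ha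
        rw [if_neg (by decide)] at hb
        rw [Nat.even_iff] at ha hb
        omega
      · rw [h0] at ha; rw [h1] at hb
        rw [if_neg (by decide)] at ha
        rw [if_pos rfl] at hb
        rw [Nat.even_iff] at ha hb
        omega
      · rw [h0, h1] at hne; exact hne rfl

end S4

namespace S4

noncomputable def posF (x : ℤ → F2) : ℕ → ℤ
  | 0 => 0
  | n + 1 => posF x n + (jump (shiftZ (posF x n) x) : ℤ)

lemma posF_succ (x : ℤ → F2) (n : ℕ) :
    posF x (n + 1) = posF x n + (jump (shiftZ (posF x n) x) : ℤ) := rfl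

lemma jump_bounds (y : ℤ → F2) : 1 ≤ jump y ∧ jump y ≤ 3 := by
  unfold jump
  split_ifs <;> omega

lemma Sspeed_iter (x : ℤ → F2) (n : ℕ) : Sspeed^[n] x = shiftZ (posF x n) x := by
  induction n with
  | zero => simp [posF]
  | succ n ih =>
      rw [Function.iterate_succ_apply', ih]
      show shiftMap^[jump (shiftZ (posF x n) x)] (shiftZ (posF x n) x) = _
      rw [shiftMap_iter, shiftZ_shiftZ, posF_succ]
      congr 1
      ring

lemma posF_strictMono (x : ℤ → F2) : StrictMono (posF x) := by
  apply strictMono_nat_of_lt_succ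
  intro n
  have h := (jump_bounds (shiftZ (posF x n) x)).1
  rw [posF_succ]
  omega

lemma posF_ge (x : ℤ → F2) (n u : ℕ) : posF x n + u ≤ posF x (n + u) := by
  induction u with
  | zero => simp
  | succ u ih =>
      have h := (jump_bounds (shiftZ (posF x (n + u)) x)).1
      rw [(by ring : n + (u + 1) = (n + u) + 1), posF_succ]
      push_cast
      omega

lemma w3inj : ∀ A B : F2,
    (∀ r : ℕ, r < 8 → wfn (substPow theta 3 A) r = wfn (substPow theta 3 B) r) → A = B := by
  decide

end S4

namespace S4

lemma mainB {x : ℤ → F2} (hx : x ∈ substShift theta) (p : ℕ) (hp : 0 < p)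
    (H : ∀ (k : ℕ) (i : ℤ), |i| ≤ 64 → (Sspeed^[k * p] x) i = x i) : False := by
  obtain ⟨g, c, hg0, hg8', hcX, HB'⟩ := tower hx 3
  have hg8 : g < 8 := by norm_num at hg8'; exact hg8'
  have HB : ∀ (j : ℤ) (r : ℕ), r < 8 → x (g + 8 * j + (r : ℤ)) = wfn (substPow theta 3 (c j)) r := by
    intro j r hr
    have := HB' j r (by norm_num; omega)
    norm_num at this
    exact this
  set wl : List F2 := [0, 1, 0, 0, 0, 1, 0, 1] with hwl
  set Occ : ℤ → Prop := fun t => ∃ j, t = g + 8 * j ∧ c j = 0 with hOcc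
  -- window characterization of Aset membership
  have hseq8 : ∀ t : ℤ, (seqWord (shiftZ t x) 0 8 = wl) ↔
      (∀ s : ℕ, s < 8 → x (t + s) = wfn wl s) := by
    intro t
    constructor
    · intro h s hs
      have h2 := congrArg (fun l => l.getD s (0 : F2)) h
      have h3 : (seqWord (shiftZ t x) 0 8).getD s 0 = (shiftZ t x) (0 + s) :=
        wfn_seqWord _ _ _ _ hs
      rw [h3] at h2
      simp only [shiftZ] at h2
      rw [(by ring : t + (s:ℤ) = 0 + (s:ℤ) + t)]
      exact h2
    · intro h
      apply List.ext_getElem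
      · simp [seqWord, hwl]
      · intro s h1 h2
        have hs : s < 8 := by simpa [seqWord] using h1
        have h3 : (seqWord (shiftZ t x) 0 8).getD s 0 = (shiftZ t x) (0 + s) :=
          wfn_seqWord _ _ _ _ hs
        rw [List.getD_eq_getElem _ _ h1] at h3
        rw [h3]
        have h4 := h s hs
        rw [wfn, List.getD_eq_getElem _ _ h2] at h4
        rw [← h4]
        simp only [shiftZ]
        congr 1
        ring
  have hAset : ∀ t : ℤ, (shiftZ t x ∈ Aset) ↔ (∀ s : ℕ, s < 8 → x (t + s) = wfn wl s) := by
    intro t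
    constructor
    · intro h
      exact (hseq8 t).mp h.2
    · intro h
      exact ⟨substShift_shiftZ hx t, (hseq8 t).mpr h⟩
  -- occurrence characterization
  have hoccw : ∀ t : ℤ, (∀ s : ℕ, s < 8 → x (t + s) = wfn wl s) ↔ Occ t := by
    intro t
    constructor
    · intro h
      obtain ⟨j, r, hr8, ht⟩ : ∃ (j : ℤ) (r : ℕ), r < 8 ∧ t = g + 8 * j + r := by
        refine ⟨(t - g) / 8, ((t - g) % 8).toNat, ?_, ?_⟩ <;>
        · have h1 := Int.emod_nonneg (t - g) (by norm_num : (8:ℤ) ≠ 0)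
          have h2 := Int.emod_lt_of_pos (t - g) (by norm_num : (0:ℤ) < 8)
          have h3 := Int.mul_ediv_add_emod (t - g) 8
          omega
      have hcell : ∀ s : ℕ, s < 8 →
          wfn (substPow theta 3 (c j) ++ substPow theta 3 (c (j + 1))) (r + s) = wfn wl s := by
        intro s hs
        rw [← h s hs]
        by_cases hrs : r + s < 8
        · rw [wfn, List.getD_append _ _ _ _ (by rw [substPow_length]; norm_num; omega)]
          have hpos : t + (s : ℤ) = g + 8 * j + ((r + s : ℕ) : ℤ) := by
            rw [ht]; push_cast; ring
          rw [hpos, HB j (r + s) hrs]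
          rfl
        · rw [wfn, List.getD_append_right _ _ _ _ (by rw [substPow_length]; norm_num; omega)]
          have hpos : t + (s : ℤ) = g + 8 * (j + 1) + ((r + s - 8 : ℕ) : ℤ) := by
            rw [ht]; push_cast; omega
          rw [substPow_length]
          have hidx : r + s - 2 ^ 3 = r + s - 8 := by norm_num
          rw [hidx, hpos, HB (j + 1) (r + s - 8) (by omega)]
          rfl
      have hcore : ∀ (r' : ℕ), r' < 8 → ∀ A B : F2,
          (∀ s : ℕ, s < 8 →
            wfn (substPow theta 3 A ++ substPow theta 3 B) (r' + s) = wfn wl s) →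
          r' = 0 ∧ A = 0 := by decide
      obtain ⟨hr0, hA0⟩ := hcore r hr8 (c j) (c (j + 1)) hcell
      exact ⟨j, by omega, hA0⟩
    · rintro ⟨j, rfl, hcj⟩
      intro s hs
      rw [(by push_cast; ring : g + 8 * j + (s:ℤ) = g + 8 * j + ((s:ℕ):ℤ)), HB j s hs, hcj]
      rw [(by decide : substPow theta 3 (0:F2) = [0,1,0,0,0,1,0,1])]
  -- image of Aset under the shift
  have hImg : ∀ t : ℤ, (shiftZ t x ∈ shiftMap '' Aset) ↔ (shiftZ (t - 1) x ∈ Aset) := by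
    intro t
    constructor
    · rintro ⟨u, hu, hequ⟩
      have h1 : u = shiftZ (t - 1) x := by
        have h2 : shiftZ (-1) (shiftMap u) = u := by
          rw [shiftMap_eq_shiftZ_one u, shiftZ_shiftZ]
          norm_num
      
        rw [← h2, hequ, shiftZ_shiftZ]
        congr 1
        ring
      rw [← h1]
      exact hu
    · intro h
      refine ⟨shiftZ (t - 1) x, h, ?_⟩
      rw [shiftMap_eq_shiftZ_one, shiftZ_shiftZ]
      congr 1
      ring
  -- jump values
  have hjump : ∀ t : ℤ, jump (shiftZ t x) =
      if Occ t then 3 else if Occ (t - 1) then 1 else 2 := by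
    intro t
    by_cases h1 : Occ t
    · rw [jump, if_pos ((hAset t).mpr ((hoccw t).mpr h1)), if_pos h1]
    · rw [jump, if_neg (fun hc => h1 ((hoccw t).mp ((hAset t).mp hc))), if_neg h1]
      by_cases h2 : Occ (t - 1)
      · rw [if_pos ((hImg t).mpr ((hAset (t - 1)).mpr ((hoccw (t - 1)).mpr h2))), if_pos h2]
      · rw [if_neg (fun hc => h2 ((hoccw (t - 1)).mp ((hAset (t - 1)).mp ((hImg t).mp hc)))),
          if_neg h2]
  have hoccg : ∀ j : ℤ, Occ (g + 8 * j) ↔ c j = 0 := by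
    intro j
    constructor
    · rintro ⟨j', hj', hc'⟩
      have : j = j' := by omega
      rw [this]; exact hc'
    · intro h; exact ⟨j, rfl, h⟩
  have hoccr : ∀ (j r : ℤ), 0 < r → r < 8 → ¬ Occ (g + 8 * j + r) := by
    rintro j r h1 h2 ⟨j', hj', _⟩
    omega
  -- single-step lemmas
  have hstep0 : ∀ (n : ℕ) (J : ℤ), posF x n = g + 8 * J →
      posF x (n + 1) = g + 8 * J + (if c J = 0 then 3 else 2) := by
    intro n J hpn
    rw [posF_succ, hpn, hjump]
    rcases f2cases (c J) with h | h
    · rw [if_pos ((hoccg J).mpr h), if_pos h]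
      norm_num
    · rw [if_neg (fun hc => by rw [(hoccg J).mp hc] at h; exact absurd h (by decide))]
      rw [if_neg (by
        have : g + 8 * J - 1 = g + 8 * (J - 1) + 7 := by ring
        rw [this]
        exact hoccr (J - 1) 7 (by norm_num) (by norm_num))]
      rw [if_neg (by rw [h]; decide)]
      norm_num
  have hstep1 : ∀ (n : ℕ) (J : ℤ), posF x n = g + 8 * J + 1 →
      posF x (n + 1) = g + 8 * J + 1 + (if c J = 0 then 1 else 2) := by
    intro n J hpn
    rw [posF_succ, hpn, hjump]
    rw [if_neg (hoccr J 1 (by norm_num) (by norm_num))]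
    rcases f2cases (c J) with h | h
    · rw [if_pos (by rw [(by ring : g + 8 * J + 1 - 1 = g + 8 * J)]; exact (hoccg J).mpr h)]
      rw [if_pos h]
      norm_num
    · rw [if_neg (by
        rw [(by ring : g + 8 * J + 1 - 1 = g + 8 * J)]
        intro hc
        rw [(hoccg J).mp hc] at h
        exact absurd h (by decide))]
      rw [if_neg (by rw [h]; decide)]
      norm_num
  have hstep2 : ∀ (n : ℕ) (J r : ℤ), 2 ≤ r → r < 8 → posF x n = g + 8 * J + r →
      posF x (n + 1) = g + 8 * J + r + 2 := by
    intro n J r h2 h8 hpn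
    rw [posF_succ, hpn, hjump]
    rw [if_neg (hoccr J r (by omega) h8)]
    rw [if_neg (by
      rw [(by ring : g + 8 * J + r - 1 = g + 8 * J + (r - 1))]
      exact hoccr J (r - 1) (by omega) (by omega))]
    norm_num
  -- crossing a cell from any offset
  have PH : ∀ (n : ℕ) (J : ℤ) (r : ℤ), 0 ≤ r → r < 8 → posF x n = g + 8 * J + r →
      posF x (n + (4 - r / 2).toNat) =
        g + 8 * (J + 1) + (if c J = 0 ∧ r ≤ 1 then 1 - r else r % 2) := by
    intro n J r hr0 hr8 hpn
    interval_cases r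
    · -- r = 0
      rcases f2cases (c J) with hcJ | hcJ
      · have h1 := hstep0 n J (by rw [hpn]; ring)
        rw [if_pos hcJ] at h1
        have h2 := hstep2 (n + 1) J 3 (by norm_num) (by norm_num) (by linarith [h1])
        have h3 := hstep2 (n + 1 + 1) J 5 (by norm_num) (by norm_num) (by linarith [h2])
        have h4 := hstep2 (n + 1 + 1 + 1) J 7 (by norm_num) (by norm_num) (by linarith [h3])
        rw [(by decide : ((4 : ℤ) - 0 / 2).toNat = 4), (by ring : n + 4 = n + 1 + 1 + 1 + 1), h4]
        rw [if_pos ⟨hcJ, by norm_num⟩]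
        ring
      · have h1 := hstep0 n J (by rw [hpn]; ring)
        rw [if_neg (by rw [hcJ]; decide)] at h1
        have h2 := hstep2 (n + 1) J 2 (by norm_num) (by norm_num) (by linarith [h1])
        have h3 := hstep2 (n + 1 + 1) J 4 (by norm_num) (by norm_num) (by linarith [h2])
        have h4 := hstep2 (n + 1 + 1 + 1) J 6 (by norm_num) (by norm_num) (by linarith [h3])
        rw [(by decide : ((4 : ℤ) - 0 / 2).toNat = 4), (by ring : n + 4 = n + 1 + 1 + 1 + 1), h4]
        rw [if_neg (by rw [hcJ]; decide)]
        ring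
    · -- r = 1
      rcases f2cases (c J) with hcJ | hcJ
      · have h1 := hstep1 n J hpn
        rw [if_pos hcJ] at h1
        have h2 := hstep2 (n + 1) J 2 (by norm_num) (by norm_num) (by linarith [h1])
        have h3 := hstep2 (n + 1 + 1) J 4 (by norm_num) (by norm_num) (by linarith [h2])
        have h4 := hstep2 (n + 1 + 1 + 1) J 6 (by norm_num) (by norm_num) (by linarith [h3])
        rw [(by decide : ((4 : ℤ) - 1 / 2).toNat = 4), (by ring : n + 4 = n + 1 + 1 + 1 + 1), h4]
        rw [if_pos ⟨hcJ, by norm_num⟩]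
        ring
      · have h1 := hstep1 n J hpn
        rw [if_neg (by rw [hcJ]; decide)] at h1
        have h2 := hstep2 (n + 1) J 3 (by norm_num) (by norm_num) (by linarith [h1])
        have h3 := hstep2 (n + 1 + 1) J 5 (by norm_num) (by norm_num) (by linarith [h2])
        have h4 := hstep2 (n + 1 + 1 + 1) J 7 (by norm_num) (by norm_num) (by linarith [h3])
        rw [(by decide : ((4 : ℤ) - 1 / 2).toNat = 4), (by ring : n + 4 = n + 1 + 1 + 1 + 1), h4]
        rw [if_neg (by rw [hcJ]; decide)]
        ring
    · -- r = 2
      have h2 := hstep2 n J 2 (by norm_num) (by norm_num) hpn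
      have h3 := hstep2 (n + 1) J 4 (by norm_num) (by norm_num) (by linarith [h2])
      have h4 := hstep2 (n + 1 + 1) J 6 (by norm_num) (by norm_num) (by linarith [h3])
      rw [(by decide : ((4 : ℤ) - 2 / 2).toNat = 3), (by ring : n + 3 = n + 1 + 1 + 1), h4]
      rw [if_neg (by rintro ⟨-, h⟩; omega)]
      ring
    · -- r = 3
      have h2 := hstep2 n J 3 (by norm_num) (by norm_num) hpn
      have h3 := hstep2 (n + 1) J 5 (by norm_num) (by norm_num) (by linarith [h2])
      have h4 := hstep2 (n + 1 + 1) J 7 (by norm_num) (by norm_num) (by linarith [h3])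
      rw [(by decide : ((4 : ℤ) - 3 / 2).toNat = 3), (by ring : n + 3 = n + 1 + 1 + 1), h4]
      rw [if_neg (by rintro ⟨-, h⟩; omega)]
      ring
    · -- r = 4
      have h3 := hstep2 n J 4 (by norm_num) (by norm_num) hpn
      have h4 := hstep2 (n + 1) J 6 (by norm_num) (by norm_num) (by linarith [h3])
      rw [(by decide : ((4 : ℤ) - 4 / 2).toNat = 2), (by ring : n + 2 = n + 1 + 1), h4]
      rw [if_neg (by rintro ⟨-, h⟩; omega)]
      ring
    · -- r = 5
      have h3 := hstep2 n J 5 (by norm_num) (by norm_num) hpn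
      have h4 := hstep2 (n + 1) J 7 (by norm_num) (by norm_num) (by linarith [h3])
      rw [(by decide : ((4 : ℤ) - 5 / 2).toNat = 2), (by ring : n + 2 = n + 1 + 1), h4]
      rw [if_neg (by rintro ⟨-, h⟩; omega)]
      ring
    · -- r = 6
      have h4 := hstep2 n J 6 (by norm_num) (by norm_num) hpn
      rw [(by decide : ((4 : ℤ) - 6 / 2).toNat = 1), h4]
      rw [if_neg (by rintro ⟨-, h⟩; omega)]
      ring
    · -- r = 7
      have h4 := hstep2 n J 7 (by norm_num) (by norm_num) hpn
      rw [(by decide : ((4 : ℤ) - 7 / 2).toNat = 1), h4]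
      rw [if_neg (by rintro ⟨-, h⟩; omega)]
      ring
  -- entry-offset evolution across cells
  have EVI : ∀ (n : ℕ) (J : ℤ) (e : ℤ), (e = 0 ∨ e = 1) → posF x n = g + 8 * J + e →
      ∀ i : ℕ, ∃ e' : ℤ, (e' = 0 ∨ e' = 1) ∧ posF x (n + 4 * i) = g + 8 * (J + i) + e' ∧
        ((e' = e) ↔ Even (cnt0 c J i)) := by
    intro n J e he hpn
    intro i
    induction i with
    | zero =>
        refine ⟨e, he, ?_, by simp [cnt0]⟩
        simpa using hpn
    | succ i ih =>
        obtain ⟨e', he', hpe, hee⟩ := ih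
        have hph := PH (n + 4 * i) (J + i) e' (by omega) (by omega) hpe
        have hd : ((4 : ℤ) - e' / 2).toNat = 4 := by
          rcases he' with h | h <;> subst h <;> decide
        rw [hd] at hph
        have hcnt : cnt0 c J (i + 1) = cnt0 c J i + (if c (J + (i : ℤ)) = 0 then 1 else 0) :=
          cnt0_succ c J i
        have harith : n + 4 * (i + 1) = n + 4 * i + 4 := by ring
        have hcell : g + 8 * (J + (i : ℤ) + 1) = g + 8 * (J + ((i : ℕ) + 1 : ℕ)) := by
          push_cast; ring
        rcases f2cases (c (J + (i : ℤ))) with hcc | hcc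
        · rw [if_pos ⟨hcc, by omega⟩] at hph
          refine ⟨1 - e', by omega, ?_, ?_⟩
          · rw [harith, hph, ← hcell]
          · rw [hcnt, if_pos hcc, Nat.even_add_one, ← hee]
            omega
        · rw [if_neg (by rintro ⟨h1, -⟩; rw [hcc] at h1; exact absurd h1 (by decide))] at hph
          have hmod : e' % 2 = e' := by omega
          rw [hmod] at hph
          refine ⟨e', he', ?_, ?_⟩
          · rw [harith, hph, ← hcell]
          · rw [hcnt, if_neg (by rw [hcc]; decide), add_zero]
            exact hee
  -- positions at the recurrence times
  have Hk : ∀ (k : ℕ) (i : ℤ), |i| ≤ 64 → x (i + posF x (k * p)) = x i := by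
    intro k i hi
    have h1 := H k i hi
    rw [Sspeed_iter] at h1
    exact h1
  -- an occurrence within the first two cells
  obtain ⟨j', hj'0, hj'1, hcj'⟩ : ∃ j' : ℤ, 0 ≤ j' ∧ j' ≤ 1 ∧ c j' = 0 := by
    rcases f2cases (c 0) with h | h
    · exact ⟨0, le_refl _, by norm_num, h⟩
    · rcases f2cases (c 1) with h1 | h1
      · exact ⟨1, by norm_num, le_refl _, h1⟩
      · exact absurd (no_b_odd hcX 0 1 (by norm_num) h (by norm_num; exact h1)) (fun hf => hf)
  -- all recurrence displacements are multiples of 8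
  have hdiv8 : ∀ k : ℕ, (8 : ℤ) ∣ posF x (k * p) := by
    intro k
    have hwo : ∀ s : ℕ, s < 8 → x ((g + 8 * j') + s) = wfn wl s := (hoccw _).mpr ⟨j', rfl, hcj'⟩
    have hwk : ∀ s : ℕ, s < 8 → x ((g + 8 * j' + posF x (k * p)) + s) = wfn wl s := by
      intro s hs
      have h1 : x ((g + 8 * j' + (s : ℤ)) + posF x (k * p)) = x (g + 8 * j' + (s : ℤ)) :=
        Hk k (g + 8 * j' + s) (by
          have : (0:ℤ) ≤ (s : ℤ) ∧ (s : ℤ) < 8 := by omega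
          rw [abs_le]
          omega)
      rw [(by ring : g + 8 * j' + posF x (k * p) + (s : ℤ) =
        (g + 8 * j' + (s : ℤ)) + posF x (k * p)), h1]
      exact hwo s hs
    obtain ⟨j'', hj'', -⟩ := (hoccw _).mp hwk
    exact ⟨j'' - j', by omega⟩
  -- decomposition of the origin
  obtain ⟨J0, r0, hr00, hr08, h0pos⟩ :
      ∃ (J0 r0 : ℤ), 0 ≤ r0 ∧ r0 < 8 ∧ (0 : ℤ) = g + 8 * J0 + r0 := by
    refine ⟨(0 - g) / 8, (0 - g) % 8, ?_, ?_, ?_⟩ <;>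
    · have h1 := Int.emod_nonneg (0 - g) (by norm_num : (8:ℤ) ≠ 0)
      have h2 := Int.emod_lt_of_pos (0 - g) (by norm_num : (0:ℤ) < 8)
      have h3 := Int.mul_ediv_add_emod (0 - g) 8
      omega
  set Jf : ℕ → ℤ := fun k => J0 + posF x (k * p) / 8 with hJf
  have hJk : ∀ k : ℕ, posF x (k * p) = g + 8 * Jf k + r0 := by
    intro k
    obtain ⟨Jd, hJd⟩ := hdiv8 k
    have hq : posF x (k * p) / 8 = Jd := by rw [hJd]; omega
    rw [hJf]
    simp only
    rw [hq, hJd]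
    omega
  -- the cell colors at recurrence times all agree
  have hcol : ∀ k : ℕ, c (Jf k) = c J0 := by
    intro k
    apply w3inj
    intro r hr
    have h1 := HB (Jf k) r hr
    have h2 := HB J0 r hr
    obtain ⟨Jd, hJd⟩ := hdiv8 k
    have h3 : g + 8 * Jf k + (r : ℤ) = (g + 8 * J0 + (r : ℤ)) + posF x (k * p) := by
      have := hJk k
      omega
    have h4 := Hk k (g + 8 * J0 + r) (by rw [abs_le]; omega)
    rw [← h1, h3, h4, h2]
  -- entry data
  set dstar : ℕ := ((4 : ℤ) - r0 / 2).toNat with hdstar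
  set ez : ℤ := if c J0 = 0 ∧ r0 ≤ 1 then 1 - r0 else r0 % 2 with hez
  have hez01 : ez = 0 ∨ ez = 1 := by
    rw [hez]
    split_ifs with h
    · obtain ⟨-, h2⟩ := h
      omega
    · omega
  have hentry : ∀ k : ℕ, posF x (k * p + dstar) = g + 8 * (Jf k + 1) + ez := by
    intro k
    have hph := PH (k * p) (Jf k) r0 hr00 hr08 (hJk k)
    rw [hcol k] at hph
    exact hph
  have hgrow : ∀ k : ℕ, Jf k + 1 ≤ Jf (k + 1) := by
    intro k
    have h1 : posF x (k * p) + p ≤ posF x ((k + 1) * p) := by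
      have h2 := posF_ge x (k * p) p
      rw [(by ring : k * p + p = (k + 1) * p)] at h2
      exact h2
    have h3 := hJk k
    have h4 := hJk (k + 1)
    omega
  have hkey : ∀ k : ℕ, p = 4 * (Jf (k + 1) - Jf k).toNat ∧
      Even (cnt0 c (Jf k + 1) ((Jf (k + 1) - Jf k).toNat)) := by
    intro k
    set istar : ℕ := (Jf (k + 1) - Jf k).toNat with histar
    have histZ : (istar : ℤ) = Jf (k + 1) - Jf k := by
      rw [histar]
      exact Int.toNat_of_nonneg (by have := hgrow k; omega)
    obtain ⟨e'', he''01, hpos'', hpar⟩ :=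
      EVI (k * p + dstar) (Jf k + 1) ez hez01 (hentry k) istar
    have hcellpos : posF x (k * p + dstar + 4 * istar) = g + 8 * (Jf (k + 1) + 1) + e'' := by
      rw [hpos'']
      have harg : Jf k + 1 + (istar : ℤ) = Jf (k + 1) + 1 := by omega
      rw [harg]
    have hpos2 := hentry (k + 1)
    have heq : e'' = ez := by
      by_contra hne
      rcases he''01 with h1 | h1 <;> rcases hez01 with h2 | h2
      · exact hne (by rw [h1, h2])
      · -- e'' = 0, ez = 1
        have hlt : posF x (k * p + dstar + 4 * istar) < posF x ((k + 1) * p + dstar) := by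
          rw [hcellpos, hpos2, h1, h2]
          omega
        have hn12 : k * p + dstar + 4 * istar < (k + 1) * p + dstar :=
          (posF_strictMono x).lt_iff_lt.mp hlt
        have hj2 : 2 ≤ (jump (shiftZ (posF x (k * p + dstar + 4 * istar)) x) : ℤ) := by
          rw [hcellpos, h1, add_zero, hjump]
          split_ifs with ha hb
          · norm_num
          · exfalso
            refine hoccr (Jf (k + 1)) 7 (by norm_num) (by norm_num) ?_
            have hPm : g + 8 * (Jf (k + 1) + 1) - 1 = g + 8 * (Jf (k + 1)) + 7 := by ring
            rw [← hPm]
            exact hb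
          · norm_num
        have hnext : posF x (k * p + dstar + 4 * istar) + 2 ≤
            posF x (k * p + dstar + 4 * istar + 1) := by
          rw [posF_succ]
          omega
        have hle : k * p + dstar + 4 * istar + 1 ≤ (k + 1) * p + dstar := by omega
        have hmono2 := (posF_strictMono x).monotone hle
        rw [hpos2, h2] at hmono2
        rw [hcellpos, h1] at hnext
        linarith
      · -- e'' = 1, ez = 0
        have hlt : posF x ((k + 1) * p + dstar) < posF x (k * p + dstar + 4 * istar) := by
          rw [hcellpos, hpos2, h1, h2]
          omega
        have hn21 : (k + 1) * p + dstar < k * p + dstar + 4 * istar :=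
          (posF_strictMono x).lt_iff_lt.mp hlt
        have hj2 : 2 ≤ (jump (shiftZ (posF x ((k + 1) * p + dstar)) x) : ℤ) := by
          rw [hpos2, h2, add_zero, hjump]
          split_ifs with ha hb
          · norm_num
          · exfalso
            refine hoccr (Jf (k + 1)) 7 (by norm_num) (by norm_num) ?_
            have hPm : g + 8 * (Jf (k + 1) + 1) - 1 = g + 8 * (Jf (k + 1)) + 7 := by ring
            rw [← hPm]
            exact hb
          · norm_num
        have hnext : posF x ((k + 1) * p + dstar) + 2 ≤
            posF x ((k + 1) * p + dstar + 1) := by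
          rw [posF_succ]
          omega
        have hle : (k + 1) * p + dstar + 1 ≤ k * p + dstar + 4 * istar := by omega
        have hmono2 := (posF_strictMono x).monotone hle
        rw [hcellpos, h1] at hmono2
        rw [hpos2, h2] at hnext
        linarith
      · exact hne (by rw [h1, h2])
    have hposeq : posF x (k * p + dstar + 4 * istar) = posF x ((k + 1) * p + dstar) := by
      rw [hcellpos, hpos2, heq]
    have htimes := (posF_strictMono x).injective hposeq
    have hexp : (k + 1) * p = k * p + p := by ring
    refine ⟨by omega, ?_⟩
    rw [heq] at hpar
    exact hpar.mp rfl
  set Dl : ℕ := (Jf 1 - Jf 0).toNat with hDl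
  have hDp : p = 4 * Dl := (hkey 0).1
  have hD1 : 1 ≤ Dl := by omega
  have hconst : ∀ k : ℕ, (Jf (k + 1) - Jf k).toNat = Dl := by
    intro k
    have h1 := (hkey k).1
    omega
  have hJlin : ∀ k : ℕ, Jf k = Jf 0 + (k : ℤ) * Dl := by
    intro k
    induction k with
    | zero => simp
    | succ k ih =>
        have h1 := hconst k
        have h2 := hgrow k
        have h3 : Jf (k + 1) = Jf k + (Dl : ℤ) := by omega
        rw [h3, ih]
        push_cast
        ring
  apply no_even_AP Dl hD1 c hcX (Jf 0 + 1)
  intro k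
  have h2 := (hkey k).2
  rw [hconst k, hJlin k] at h2
  have h3 : Jf 0 + (k : ℤ) * Dl + 1 = Jf 0 + 1 + (k : ℤ) * Dl := by ring
  rw [h3] at h2
  exact h2




end S4

/-- the speedup (X_θ, S) of Example 3.1 is not a Toeplitz flow. -/
theorem statement4 : ¬ IsToeplitzFlow (substShift theta) Sspeed := by
  intro hT
  obtain ⟨B, fB, z, hz, hconj⟩ := hT
  letI : TopologicalSpace B := ⊥
  haveI : DiscreteTopology B := ⟨rfl⟩
  obtain ⟨hS, hR, h, hcomm⟩ := hconj
  have hzY : z ∈ orbitClosure z := subset_closure ⟨0, by funext m; simp [shiftZ]⟩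
  set x0 : ℤ → Fin 2 := ((h.symm ⟨z, hzY⟩ : ↥(substShift theta)) : ℤ → Fin 2) with hx0
  have hx0X : x0 ∈ substShift theta := (h.symm ⟨z, hzY⟩).2
  -- conjugacy transported to inverse direction
  have hcomm' : ∀ v : ↥(orbitClosure z),
      (Set.MapsTo.restrict Sspeed _ _ hS) (h.symm v) =
        h.symm ((Set.MapsTo.restrict shiftMap _ _ hR) v) := by
    intro v
    have h1 := hcomm (h.symm v)
    rw [h.apply_symm_apply] at h1
    have h2 := congrArg h.symm h1
    rwa [h.symm_apply_apply] at h2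
  have hIter : ∀ n : ℕ, (Set.MapsTo.restrict Sspeed _ _ hS)^[n] (h.symm ⟨z, hzY⟩) =
      h.symm ((Set.MapsTo.restrict shiftMap _ _ hR)^[n] ⟨z, hzY⟩) := by
    intro n
    induction n with
    | zero => simp
    | succ n ih =>
        rw [Function.iterate_succ_apply', Function.iterate_succ_apply', ih, hcomm']
  have hvalS : ∀ (n : ℕ) (u : ↥(substShift theta)),
      (((Set.MapsTo.restrict Sspeed _ _ hS)^[n] u : ↥(substShift theta)) : ℤ → Fin 2) =
        Sspeed^[n] (u : ℤ → Fin 2) := by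
    intro n
    induction n with
    | zero => intro u; simp
    | succ n ih =>
        intro u
        rw [Function.iterate_succ_apply', Function.iterate_succ_apply',
          Set.MapsTo.val_restrict_apply, ih]
  have hvalR : ∀ n : ℕ,
      (((Set.MapsTo.restrict shiftMap _ _ hR)^[n] ⟨z, hzY⟩ : ↥(orbitClosure z)) : ℤ → B) =
        shiftZ (n : ℤ) z := by
    intro n
    induction n with
    | zero => simp
    | succ n ih =>
        rw [Function.iterate_succ_apply', Set.MapsTo.val_restrict_apply, ih,
          S4.shiftMap_eq_shiftZ_one, S4.shiftZ_shiftZ]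
        congr 1
        push_cast
        ring
  -- regular recurrence of x0 under Sspeed
  have hrec : ∃ p : ℕ, 0 < p ∧ ∀ (k : ℕ) (i : ℤ), |i| ≤ 64 → Sspeed^[k * p] x0 i = x0 i := by
    set U : Set ↥(substShift theta) :=
      {u | ∀ i : ℤ, |i| ≤ 64 → (u : ℤ → Fin 2) i = x0 i} with hU
    have hUopen : IsOpen U := by
      have hUeq : U = Subtype.val ⁻¹'
          ((↑(Finset.Icc (-64 : ℤ) 64) : Set ℤ).pi (fun i => {x0 i})) := by
        ext u
        simp only [hU, Set.mem_setOf_eq, Set.mem_preimage, Set.mem_pi, Finset.mem_coe,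
          Finset.mem_Icc, Set.mem_singleton_iff]
        constructor
        · intro hu i hi
          exact hu i (abs_le.mpr hi)
        · intro hu i hi
          exact hu i (abs_le.mp hi)
      rw [hUeq]
      apply IsOpen.preimage continuous_subtype_val
      exact isOpen_set_pi (Finset.finite_toSet _) (fun a _ => isOpen_discrete _)
    have hx0U : h.symm ⟨z, hzY⟩ ∈ U := fun i _ => rfl
    have hVopen : IsOpen (h.symm ⁻¹' U : Set ↥(orbitClosure z)) :=
      h.symm.continuous.isOpen_preimage U hUopen
    obtain ⟨G, hGopen, hGeq⟩ := isOpen_induced_iff.mp hVopen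
    have hzV : (⟨z, hzY⟩ : ↥(orbitClosure z)) ∈ h.symm ⁻¹' U := hx0U
    have hzG : z ∈ G := by
      rw [← hGeq] at hzV
      exact hzV
    obtain ⟨I, uSets, hIu, hIsub⟩ := isOpen_pi_iff.mp hGopen z hzG
    choose q hqpos hq using hz
    set p : ℕ := ∏ i ∈ I, q i with hp
    have hppos : 0 < p := Finset.prod_pos (fun i _ => hqpos i)
    refine ⟨p, hppos, ?_⟩
    intro k i hi
    have hcyl : shiftZ ((k * p : ℕ) : ℤ) z ∈ (I : Set ℤ).pi uSets := by
      intro i' hi'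
      have hdvd : q i' ∣ p := Finset.dvd_prod_of_mem q (Finset.mem_coe.mp hi')
      obtain ⟨t, ht⟩ := hdvd
      have hzi : (shiftZ ((k * p : ℕ) : ℤ) z) i' = z i' := by
        show z (i' + ((k * p : ℕ) : ℤ)) = z i'
        have hnat : k * p = (k * t) * q i' := by rw [ht]; ring
        have harg : ((k * p : ℕ) : ℤ) = ((k * t : ℕ) : ℤ) * (q i' : ℤ) := by
          exact_mod_cast hnat
        rw [harg]
        exact hq i' (k * t)
      rw [hzi]
      exact (hIu i' (Finset.mem_coe.mp hi')).2
    have hzkY : shiftZ ((k * p : ℕ) : ℤ) z ∈ orbitClosure z :=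
      subset_closure ⟨((k * p : ℕ) : ℤ), rfl⟩
    have hzkV : (⟨shiftZ ((k * p : ℕ) : ℤ) z, hzkY⟩ : ↥(orbitClosure z)) ∈ h.symm ⁻¹' U := by
      rw [← hGeq]
      exact hIsub hcyl
    have hmem : h.symm ⟨shiftZ ((k * p : ℕ) : ℤ) z, hzkY⟩ ∈ U := hzkV
    have hsub : ((Set.MapsTo.restrict shiftMap _ _ hR)^[k * p] ⟨z, hzY⟩ : ↥(orbitClosure z)) =
        ⟨shiftZ ((k * p : ℕ) : ℤ) z, hzkY⟩ := by
      apply Subtype.ext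
      rw [hvalR]
    have hfin : Sspeed^[k * p] x0 =
        ((h.symm ⟨shiftZ ((k * p : ℕ) : ℤ) z, hzkY⟩ : ↥(substShift theta)) : ℤ → Fin 2) := by
      rw [hx0, ← hvalS (k * p), hIter (k * p), hsub]
    rw [hfin]
    exact hmem i hi
  obtain ⟨p, hppos, hrec'⟩ := hrec
  exact S4.mainB hx0X p hppos hrec'

end
end
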